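/- Let X := ℤ³ × ℂ³ × (ℂ ∖ {0,1}), and define the bijections σ₀, σ₁, σ₂, σ₃ of X by σ₀(k,l,m; a,b,c; x) = (−k,−l,−m; a+k, b+l, c+m; x), σ₁(k,l,m; a,b,c; x) = (m−k, l, m; c−a, b, c; x/(x−1)), σ₂(k,l,m; a,b,c; x) = (k, l, k+l−m; a, b, a+b+1−c; 1−x), and σ₃(k,l,m; a,b,c; x) = (l, k, m; b, a, c; x). Then the subgroup G of the permutation group of X generated by σ₀, σ₁, σ₂, σ₃ has exactly 96 elements. -/

import Mathlib

/-- The set `X = ℤ³ × ℂ³ × (ℂ ∖ {0,1})`. -/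
abbrev Xset : Type := (ℤ × ℤ × ℤ) × (ℂ × ℂ × ℂ) × {x : ℂ // x ≠ 0 ∧ x ≠ 1}

namespace Xset

lemma mobius_mem {x : ℂ} (hx : x ≠ 0 ∧ x ≠ 1) : x / (x - 1) ≠ 0 ∧ x / (x - 1) ≠ 1 := by
  have h1 : x - 1 ≠ 0 := sub_ne_zero.mpr hx.2
  refine ⟨div_ne_zero hx.1 h1, fun h => ?_⟩
  have hx' : x = x - 1 := (div_eq_one_iff_eq h1).mp h
  exact one_ne_zero (by linear_combination hx')

lemma one_sub_mem {x : ℂ} (hx : x ≠ 0 ∧ x ≠ 1) : (1 : ℂ) - x ≠ 0 ∧ (1 : ℂ) - x ≠ 1 := by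
  refine ⟨sub_ne_zero.mpr (Ne.symm hx.2), fun h => hx.1 (by linear_combination -h)⟩

def f0 : Xset → Xset :=
  fun p => ⟨⟨-p.1.1, -p.1.2.1, -p.1.2.2⟩,
    ⟨p.2.1.1 + p.1.1, p.2.1.2.1 + p.1.2.1, p.2.1.2.2 + p.1.2.2⟩, p.2.2⟩

lemma f0_inv : Function.Involutive f0 := by
  rintro ⟨⟨k, l, m⟩, ⟨a, b, c⟩, x⟩
  simp only [f0, neg_neg, Prod.mk.injEq, Subtype.mk.injEq]
  refine ⟨trivial, ⟨?_, ?_, ?_⟩, trivial⟩ <;> push_cast <;> ring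

noncomputable def f1 : Xset → Xset :=
  fun p => ⟨⟨p.1.2.2 - p.1.1, p.1.2.1, p.1.2.2⟩,
    ⟨p.2.1.2.2 - p.2.1.1, p.2.1.2.1, p.2.1.2.2⟩,
    ⟨p.2.2.1 / (p.2.2.1 - 1), mobius_mem p.2.2.2⟩⟩

lemma f1_inv : Function.Involutive f1 := by
  rintro ⟨⟨k, l, m⟩, ⟨a, b, c⟩, ⟨x, hx⟩⟩
  have h1 : x - 1 ≠ 0 := sub_ne_zero.mpr hx.2
  have h2 : x / (x - 1) - 1 ≠ 0 := sub_ne_zero.mpr (mobius_mem hx).2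
  simp only [f1, Prod.mk.injEq, Subtype.mk.injEq]
  refine ⟨⟨by ring, trivial⟩, ⟨by ring, trivial⟩, ?_⟩
  field_simp
  ring

noncomputable def f2 : Xset → Xset :=
  fun p => ⟨⟨p.1.1, p.1.2.1, p.1.1 + p.1.2.1 - p.1.2.2⟩,
    ⟨p.2.1.1, p.2.1.2.1, p.2.1.1 + p.2.1.2.1 + 1 - p.2.1.2.2⟩,
    ⟨1 - p.2.2.1, one_sub_mem p.2.2.2⟩⟩

lemma f2_inv : Function.Involutive f2 := by
  rintro ⟨⟨k, l, m⟩, ⟨a, b, c⟩, ⟨x, hx⟩⟩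
  simp only [f2, Prod.mk.injEq, Subtype.mk.injEq]
  exact ⟨⟨trivial, trivial, by ring⟩, ⟨trivial, trivial, by ring⟩, by ring⟩

def f3 : Xset → Xset :=
  fun p => ⟨⟨p.1.2.1, p.1.1, p.1.2.2⟩, ⟨p.2.1.2.1, p.2.1.1, p.2.1.2.2⟩, p.2.2⟩

lemma f3_inv : Function.Involutive f3 := by
  rintro ⟨⟨k, l, m⟩, ⟨a, b, c⟩, x⟩
  rfl

/-- `σ₀(k,l,m; a,b,c; x) = (−k,−l,−m; a+k, b+l, c+m; x)`. -/
noncomputable def s0 : Equiv.Perm Xset := f0_inv.toPerm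
/-- `σ₁(k,l,m; a,b,c; x) = (m−k, l, m; c−a, b, c; x/(x−1))`. -/
noncomputable def s1 : Equiv.Perm Xset := f1_inv.toPerm
/-- `σ₂(k,l,m; a,b,c; x) = (k, l, k+l−m; a, b, a+b+1−c; 1−x)`. -/
noncomputable def s2 : Equiv.Perm Xset := f2_inv.toPerm
/-- `σ₃(k,l,m; a,b,c; x) = (l, k, m; b, a, c; x)`. -/
noncomputable def s3 : Equiv.Perm Xset := f3_inv.toPerm

end Xset


set_option maxRecDepth 40000
set_option maxHeartbeats 4000000
set_option synthInstance.maxSize 100000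
set_option synthInstance.maxHeartbeats 2000000

section Framework
open Xset

abbrev R7 := ℤ × ℤ × ℤ × ℤ × ℤ × ℤ × ℤ
abbrev C7 := ℂ × ℂ × ℂ × ℂ × ℂ × ℂ × ℂ
abbrev M7 := R7 × R7 × R7 × R7 × R7 × R7 × R7
abbrev Mob := ℤ × ℤ × ℤ × ℤ
abbrev D := M7 × Mob

def rdot (r : R7) (v : C7) : ℂ := (r.1 : ℂ) * v.1 + (r.2.1 : ℂ) * v.2.1 + (r.2.2.1 : ℂ) * v.2.2.1 + (r.2.2.2.1 : ℂ) * v.2.2.2.1 + (r.2.2.2.2.1 : ℂ) * v.2.2.2.2.1 + (r.2.2.2.2.2.1 : ℂ) * v.2.2.2.2.2.1 + (r.2.2.2.2.2.2 : ℂ) * v.2.2.2.2.2.2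

def mApply (A : M7) (v : C7) : C7 :=
  (rdot A.1 v,
   rdot A.2.1 v,
   rdot A.2.2.1 v,
   rdot A.2.2.2.1 v,
   rdot A.2.2.2.2.1 v,
   rdot A.2.2.2.2.2.1 v,
   rdot A.2.2.2.2.2.2 v)

def m7mul (A B : M7) : M7 :=
  ((A.1.1 * B.1.1 + A.1.2.1 * B.2.1.1 + A.1.2.2.1 * B.2.2.1.1 + A.1.2.2.2.1 * B.2.2.2.1.1 + A.1.2.2.2.2.1 * B.2.2.2.2.1.1 + A.1.2.2.2.2.2.1 * B.2.2.2.2.2.1.1 + A.1.2.2.2.2.2.2 * B.2.2.2.2.2.2.1, A.1.1 * B.1.2.1 + A.1.2.1 * B.2.1.2.1 + A.1.2.2.1 * B.2.2.1.2.1 + A.1.2.2.2.1 * B.2.2.2.1.2.1 + A.1.2.2.2.2.1 * B.2.2.2.2.1.2.1 + A.1.2.2.2.2.2.1 * B.2.2.2.2.2.1.2.1 + A.1.2.2.2.2.2.2 * B.2.2.2.2.2.2.2.1, A.1.1 * B.1.2.2.1 + A.1.2.1 * B.2.1.2.2.1 + A.1.2.2.1 * B.2.2.1.2.2.1 + A.1.2.2.2.1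 * B.2.2.2.1.2.2.1 + A.1.2.2.2.2.1 * B.2.2.2.2.1.2.2.1 + A.1.2.2.2.2.2.1 * B.2.2.2.2.2.1.2.2.1 + A.1.2.2.2.2.2.2 * B.2.2.2.2.2.2.2.2.1, A.1.1 * B.1.2.2.2.1 + A.1.2.1 * B.2.1.2.2.2.1 + A.1.2.2.1 * B.2.2.1.2.2.2.1 + A.1.2.2.2.1 * B.2.2.2.1.2.2.2.1 + A.1.2.2.2.2.1 * B.2.2.2.2.1.2.2.2.1 + A.1.2.2.2.2.2.1 * B.2.2.2.2.2.1.2.2.2.1 + A.1.2.2.2.2.2.2 * B.2.2.2.2.2.2.2.2.2.1, A.1.1 * B.1.2.2.2.2.1 + A.1.2.1 * B.2.1.2.2.2.2.1 + A.1.2.2.1 * B.2.2.1.2.2.2.2.1 + A.1.2.2.2.1 * B.2.2.2.1.2.2.2.2.1 + A.1.2.2.2.2.1 * B.2.2.2.2.1.2.2.2.2.1 + A.1.2.2.2.2.2.1 * B.2.2.2.2.2.1.2.2.2.2.1 + A.1.2.2.2.2.2.2 * B.2.2.2.2.2.2.2.2.2.2.1, A.1.1 * B.1.2.2.2.2.2.1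 + A.1.2.1 * B.2.1.2.2.2.2.2.1 + A.1.2.2.1 * B.2.2.1.2.2.2.2.2.1 + A.1.2.2.2.1 * B.2.2.2.1.2.2.2.2.2.1 + A.1.2.2.2.2.1 * B.2.2.2.2.1.2.2.2.2.2.1 + A.1.2.2.2.2.2.1 * B.2.2.2.2.2.1.2.2.2.2.2.1 + A.1.2.2.2.2.2.2 * B.2.2.2.2.2.2.2.2.2.2.2.1, A.1.1 * B.1.2.2.2.2.2.2 + A.1.2.1 * B.2.1.2.2.2.2.2.2 + A.1.2.2.1 * B.2.2.1.2.2.2.2.2.2 + A.1.2.2.2.1 * B.2.2.2.1.2.2.2.2.2.2 + A.1.2.2.2.2.1 * B.2.2.2.2.1.2.2.2.2.2.2 + A.1.2.2.2.2.2.1 * B.2.2.2.2.2.1.2.2.2.2.2.2 + A.1.2.2.2.2.2.2 * B.2.2.2.2.2.2.2.2.2.2.2.2),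
   (A.2.1.1 * B.1.1 + A.2.1.2.1 * B.2.1.1 + A.2.1.2.2.1 * B.2.2.1.1 + A.2.1.2.2.2.1 * B.2.2.2.1.1 + A.2.1.2.2.2.2.1 * B.2.2.2.2.1.1 + A.2.1.2.2.2.2.2.1 * B.2.2.2.2.2.1.1 + A.2.1.2.2.2.2.2.2 * B.2.2.2.2.2.2.1, A.2.1.1 * B.1.2.1 + A.2.1.2.1 * B.2.1.2.1 + A.2.1.2.2.1 * B.2.2.1.2.1 + A.2.1.2.2.2.1 * B.2.2.2.1.2.1 + A.2.1.2.2.2.2.1 * B.2.2.2.2.1.2.1 + A.2.1.2.2.2.2.2.1 * B.2.2.2.2.2.1.2.1 + A.2.1.2.2.2.2.2.2 * B.2.2.2.2.2.2.2.1, A.2.1.1 * B.1.2.2.1 + A.2.1.2.1 * B.2.1.2.2.1 + A.2.1.2.2.1 * B.2.2.1.2.2.1 + A.2.1.2.2.2.1 * B.2.2.2.1.2.2.1 + A.2.1.2.2.2.2.1 * B.2.2.2.2.1.2.2.1 + A.2.1.2.2.2.2.2.1 * B.2.2.2.2.2.1.2.2.1 + A.2.1.2.2.2.2.2.2 * B.2.2.2.2.2.2.2.2.1,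 A.2.1.1 * B.1.2.2.2.1 + A.2.1.2.1 * B.2.1.2.2.2.1 + A.2.1.2.2.1 * B.2.2.1.2.2.2.1 + A.2.1.2.2.2.1 * B.2.2.2.1.2.2.2.1 + A.2.1.2.2.2.2.1 * B.2.2.2.2.1.2.2.2.1 + A.2.1.2.2.2.2.2.1 * B.2.2.2.2.2.1.2.2.2.1 + A.2.1.2.2.2.2.2.2 * B.2.2.2.2.2.2.2.2.2.1, A.2.1.1 * B.1.2.2.2.2.1 + A.2.1.2.1 * B.2.1.2.2.2.2.1 + A.2.1.2.2.1 * B.2.2.1.2.2.2.2.1 + A.2.1.2.2.2.1 * B.2.2.2.1.2.2.2.2.1 + A.2.1.2.2.2.2.1 * B.2.2.2.2.1.2.2.2.2.1 + A.2.1.2.2.2.2.2.1 * B.2.2.2.2.2.1.2.2.2.2.1 + A.2.1.2.2.2.2.2.2 * B.2.2.2.2.2.2.2.2.2.2.1, A.2.1.1 * B.1.2.2.2.2.2.1 + A.2.1.2.1 * B.2.1.2.2.2.2.2.1 + A.2.1.2.2.1 * B.2.2.1.2.2.2.2.2.1 + A.2.1.2.2.2.1 * B.2.2.2.1.2.2.2.2.2.1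 + A.2.1.2.2.2.2.1 * B.2.2.2.2.1.2.2.2.2.2.1 + A.2.1.2.2.2.2.2.1 * B.2.2.2.2.2.1.2.2.2.2.2.1 + A.2.1.2.2.2.2.2.2 * B.2.2.2.2.2.2.2.2.2.2.2.1, A.2.1.1 * B.1.2.2.2.2.2.2 + A.2.1.2.1 * B.2.1.2.2.2.2.2.2 + A.2.1.2.2.1 * B.2.2.1.2.2.2.2.2.2 + A.2.1.2.2.2.1 * B.2.2.2.1.2.2.2.2.2.2 + A.2.1.2.2.2.2.1 * B.2.2.2.2.1.2.2.2.2.2.2 + A.2.1.2.2.2.2.2.1 * B.2.2.2.2.2.1.2.2.2.2.2.2 + A.2.1.2.2.2.2.2.2 * B.2.2.2.2.2.2.2.2.2.2.2.2),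
   (A.2.2.1.1 * B.1.1 + A.2.2.1.2.1 * B.2.1.1 + A.2.2.1.2.2.1 * B.2.2.1.1 + A.2.2.1.2.2.2.1 * B.2.2.2.1.1 + A.2.2.1.2.2.2.2.1 * B.2.2.2.2.1.1 + A.2.2.1.2.2.2.2.2.1 * B.2.2.2.2.2.1.1 + A.2.2.1.2.2.2.2.2.2 * B.2.2.2.2.2.2.1, A.2.2.1.1 * B.1.2.1 + A.2.2.1.2.1 * B.2.1.2.1 + A.2.2.1.2.2.1 * B.2.2.1.2.1 + A.2.2.1.2.2.2.1 * B.2.2.2.1.2.1 + A.2.2.1.2.2.2.2.1 * B.2.2.2.2.1.2.1 + A.2.2.1.2.2.2.2.2.1 * B.2.2.2.2.2.1.2.1 + A.2.2.1.2.2.2.2.2.2 * B.2.2.2.2.2.2.2.1, A.2.2.1.1 * B.1.2.2.1 + A.2.2.1.2.1 * B.2.1.2.2.1 + A.2.2.1.2.2.1 * B.2.2.1.2.2.1 + A.2.2.1.2.2.2.1 * B.2.2.2.1.2.2.1 + A.2.2.1.2.2.2.2.1 * B.2.2.2.2.1.2.2.1 + A.2.2.1.2.2.2.2.2.1 * B.2.2.2.2.2.1.2.2.1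 + A.2.2.1.2.2.2.2.2.2 * B.2.2.2.2.2.2.2.2.1, A.2.2.1.1 * B.1.2.2.2.1 + A.2.2.1.2.1 * B.2.1.2.2.2.1 + A.2.2.1.2.2.1 * B.2.2.1.2.2.2.1 + A.2.2.1.2.2.2.1 * B.2.2.2.1.2.2.2.1 + A.2.2.1.2.2.2.2.1 * B.2.2.2.2.1.2.2.2.1 + A.2.2.1.2.2.2.2.2.1 * B.2.2.2.2.2.1.2.2.2.1 + A.2.2.1.2.2.2.2.2.2 * B.2.2.2.2.2.2.2.2.2.1, A.2.2.1.1 * B.1.2.2.2.2.1 + A.2.2.1.2.1 * B.2.1.2.2.2.2.1 + A.2.2.1.2.2.1 * B.2.2.1.2.2.2.2.1 + A.2.2.1.2.2.2.1 * B.2.2.2.1.2.2.2.2.1 + A.2.2.1.2.2.2.2.1 * B.2.2.2.2.1.2.2.2.2.1 + A.2.2.1.2.2.2.2.2.1 * B.2.2.2.2.2.1.2.2.2.2.1 + A.2.2.1.2.2.2.2.2.2 * B.2.2.2.2.2.2.2.2.2.2.1, A.2.2.1.1 * B.1.2.2.2.2.2.1 + A.2.2.1.2.1 * B.2.1.2.2.2.2.2.1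 + A.2.2.1.2.2.1 * B.2.2.1.2.2.2.2.2.1 + A.2.2.1.2.2.2.1 * B.2.2.2.1.2.2.2.2.2.1 + A.2.2.1.2.2.2.2.1 * B.2.2.2.2.1.2.2.2.2.2.1 + A.2.2.1.2.2.2.2.2.1 * B.2.2.2.2.2.1.2.2.2.2.2.1 + A.2.2.1.2.2.2.2.2.2 * B.2.2.2.2.2.2.2.2.2.2.2.1, A.2.2.1.1 * B.1.2.2.2.2.2.2 + A.2.2.1.2.1 * B.2.1.2.2.2.2.2.2 + A.2.2.1.2.2.1 * B.2.2.1.2.2.2.2.2.2 + A.2.2.1.2.2.2.1 * B.2.2.2.1.2.2.2.2.2.2 + A.2.2.1.2.2.2.2.1 * B.2.2.2.2.1.2.2.2.2.2.2 + A.2.2.1.2.2.2.2.2.1 * B.2.2.2.2.2.1.2.2.2.2.2.2 + A.2.2.1.2.2.2.2.2.2 * B.2.2.2.2.2.2.2.2.2.2.2.2),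
   (A.2.2.2.1.1 * B.1.1 + A.2.2.2.1.2.1 * B.2.1.1 + A.2.2.2.1.2.2.1 * B.2.2.1.1 + A.2.2.2.1.2.2.2.1 * B.2.2.2.1.1 + A.2.2.2.1.2.2.2.2.1 * B.2.2.2.2.1.1 + A.2.2.2.1.2.2.2.2.2.1 * B.2.2.2.2.2.1.1 + A.2.2.2.1.2.2.2.2.2.2 * B.2.2.2.2.2.2.1, A.2.2.2.1.1 * B.1.2.1 + A.2.2.2.1.2.1 * B.2.1.2.1 + A.2.2.2.1.2.2.1 * B.2.2.1.2.1 + A.2.2.2.1.2.2.2.1 * B.2.2.2.1.2.1 + A.2.2.2.1.2.2.2.2.1 * B.2.2.2.2.1.2.1 + A.2.2.2.1.2.2.2.2.2.1 * B.2.2.2.2.2.1.2.1 + A.2.2.2.1.2.2.2.2.2.2 * B.2.2.2.2.2.2.2.1, A.2.2.2.1.1 * B.1.2.2.1 + A.2.2.2.1.2.1 * B.2.1.2.2.1 + A.2.2.2.1.2.2.1 * B.2.2.1.2.2.1 + A.2.2.2.1.2.2.2.1 * B.2.2.2.1.2.2.1 + A.2.2.2.1.2.2.2.2.1 * B.2.2.2.2.1.2.2.1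 + A.2.2.2.1.2.2.2.2.2.1 * B.2.2.2.2.2.1.2.2.1 + A.2.2.2.1.2.2.2.2.2.2 * B.2.2.2.2.2.2.2.2.1, A.2.2.2.1.1 * B.1.2.2.2.1 + A.2.2.2.1.2.1 * B.2.1.2.2.2.1 + A.2.2.2.1.2.2.1 * B.2.2.1.2.2.2.1 + A.2.2.2.1.2.2.2.1 * B.2.2.2.1.2.2.2.1 + A.2.2.2.1.2.2.2.2.1 * B.2.2.2.2.1.2.2.2.1 + A.2.2.2.1.2.2.2.2.2.1 * B.2.2.2.2.2.1.2.2.2.1 + A.2.2.2.1.2.2.2.2.2.2 * B.2.2.2.2.2.2.2.2.2.1, A.2.2.2.1.1 * B.1.2.2.2.2.1 + A.2.2.2.1.2.1 * B.2.1.2.2.2.2.1 + A.2.2.2.1.2.2.1 * B.2.2.1.2.2.2.2.1 + A.2.2.2.1.2.2.2.1 * B.2.2.2.1.2.2.2.2.1 + A.2.2.2.1.2.2.2.2.1 * B.2.2.2.2.1.2.2.2.2.1 + A.2.2.2.1.2.2.2.2.2.1 * B.2.2.2.2.2.1.2.2.2.2.1 + A.2.2.2.1.2.2.2.2.2.2 *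 B.2.2.2.2.2.2.2.2.2.2.1, A.2.2.2.1.1 * B.1.2.2.2.2.2.1 + A.2.2.2.1.2.1 * B.2.1.2.2.2.2.2.1 + A.2.2.2.1.2.2.1 * B.2.2.1.2.2.2.2.2.1 + A.2.2.2.1.2.2.2.1 * B.2.2.2.1.2.2.2.2.2.1 + A.2.2.2.1.2.2.2.2.1 * B.2.2.2.2.1.2.2.2.2.2.1 + A.2.2.2.1.2.2.2.2.2.1 * B.2.2.2.2.2.1.2.2.2.2.2.1 + A.2.2.2.1.2.2.2.2.2.2 * B.2.2.2.2.2.2.2.2.2.2.2.1, A.2.2.2.1.1 * B.1.2.2.2.2.2.2 + A.2.2.2.1.2.1 * B.2.1.2.2.2.2.2.2 + A.2.2.2.1.2.2.1 * B.2.2.1.2.2.2.2.2.2 + A.2.2.2.1.2.2.2.1 * B.2.2.2.1.2.2.2.2.2.2 + A.2.2.2.1.2.2.2.2.1 * B.2.2.2.2.1.2.2.2.2.2.2 + A.2.2.2.1.2.2.2.2.2.1 * B.2.2.2.2.2.1.2.2.2.2.2.2 + A.2.2.2.1.2.2.2.2.2.2 * B.2.2.2.2.2.2.2.2.2.2.2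.2),
   (A.2.2.2.2.1.1 * B.1.1 + A.2.2.2.2.1.2.1 * B.2.1.1 + A.2.2.2.2.1.2.2.1 * B.2.2.1.1 + A.2.2.2.2.1.2.2.2.1 * B.2.2.2.1.1 + A.2.2.2.2.1.2.2.2.2.1 * B.2.2.2.2.1.1 + A.2.2.2.2.1.2.2.2.2.2.1 * B.2.2.2.2.2.1.1 + A.2.2.2.2.1.2.2.2.2.2.2 * B.2.2.2.2.2.2.1, A.2.2.2.2.1.1 * B.1.2.1 + A.2.2.2.2.1.2.1 * B.2.1.2.1 + A.2.2.2.2.1.2.2.1 * B.2.2.1.2.1 + A.2.2.2.2.1.2.2.2.1 * B.2.2.2.1.2.1 + A.2.2.2.2.1.2.2.2.2.1 * B.2.2.2.2.1.2.1 + A.2.2.2.2.1.2.2.2.2.2.1 * B.2.2.2.2.2.1.2.1 + A.2.2.2.2.1.2.2.2.2.2.2 * B.2.2.2.2.2.2.2.1, A.2.2.2.2.1.1 * B.1.2.2.1 + A.2.2.2.2.1.2.1 * B.2.1.2.2.1 + A.2.2.2.2.1.2.2.1 * B.2.2.1.2.2.1 + A.2.2.2.2.1.2.2.2.1 * B.2.2.2.1.2.2.1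 + A.2.2.2.2.1.2.2.2.2.1 * B.2.2.2.2.1.2.2.1 + A.2.2.2.2.1.2.2.2.2.2.1 * B.2.2.2.2.2.1.2.2.1 + A.2.2.2.2.1.2.2.2.2.2.2 * B.2.2.2.2.2.2.2.2.1, A.2.2.2.2.1.1 * B.1.2.2.2.1 + A.2.2.2.2.1.2.1 * B.2.1.2.2.2.1 + A.2.2.2.2.1.2.2.1 * B.2.2.1.2.2.2.1 + A.2.2.2.2.1.2.2.2.1 * B.2.2.2.1.2.2.2.1 + A.2.2.2.2.1.2.2.2.2.1 * B.2.2.2.2.1.2.2.2.1 + A.2.2.2.2.1.2.2.2.2.2.1 * B.2.2.2.2.2.1.2.2.2.1 + A.2.2.2.2.1.2.2.2.2.2.2 * B.2.2.2.2.2.2.2.2.2.1, A.2.2.2.2.1.1 * B.1.2.2.2.2.1 + A.2.2.2.2.1.2.1 * B.2.1.2.2.2.2.1 + A.2.2.2.2.1.2.2.1 * B.2.2.1.2.2.2.2.1 + A.2.2.2.2.1.2.2.2.1 * B.2.2.2.1.2.2.2.2.1 + A.2.2.2.2.1.2.2.2.2.1 * B.2.2.2.2.1.2.2.2.2.1 +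 A.2.2.2.2.1.2.2.2.2.2.1 * B.2.2.2.2.2.1.2.2.2.2.1 + A.2.2.2.2.1.2.2.2.2.2.2 * B.2.2.2.2.2.2.2.2.2.2.1, A.2.2.2.2.1.1 * B.1.2.2.2.2.2.1 + A.2.2.2.2.1.2.1 * B.2.1.2.2.2.2.2.1 + A.2.2.2.2.1.2.2.1 * B.2.2.1.2.2.2.2.2.1 + A.2.2.2.2.1.2.2.2.1 * B.2.2.2.1.2.2.2.2.2.1 + A.2.2.2.2.1.2.2.2.2.1 * B.2.2.2.2.1.2.2.2.2.2.1 + A.2.2.2.2.1.2.2.2.2.2.1 * B.2.2.2.2.2.1.2.2.2.2.2.1 + A.2.2.2.2.1.2.2.2.2.2.2 * B.2.2.2.2.2.2.2.2.2.2.2.1, A.2.2.2.2.1.1 * B.1.2.2.2.2.2.2 + A.2.2.2.2.1.2.1 * B.2.1.2.2.2.2.2.2 + A.2.2.2.2.1.2.2.1 * B.2.2.1.2.2.2.2.2.2 + A.2.2.2.2.1.2.2.2.1 * B.2.2.2.1.2.2.2.2.2.2 + A.2.2.2.2.1.2.2.2.2.1 * B.2.2.2.2.1.2.2.2.2.2.2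 + A.2.2.2.2.1.2.2.2.2.2.1 * B.2.2.2.2.2.1.2.2.2.2.2.2 + A.2.2.2.2.1.2.2.2.2.2.2 * B.2.2.2.2.2.2.2.2.2.2.2.2),
   (A.2.2.2.2.2.1.1 * B.1.1 + A.2.2.2.2.2.1.2.1 * B.2.1.1 + A.2.2.2.2.2.1.2.2.1 * B.2.2.1.1 + A.2.2.2.2.2.1.2.2.2.1 * B.2.2.2.1.1 + A.2.2.2.2.2.1.2.2.2.2.1 * B.2.2.2.2.1.1 + A.2.2.2.2.2.1.2.2.2.2.2.1 * B.2.2.2.2.2.1.1 + A.2.2.2.2.2.1.2.2.2.2.2.2 * B.2.2.2.2.2.2.1, A.2.2.2.2.2.1.1 * B.1.2.1 + A.2.2.2.2.2.1.2.1 * B.2.1.2.1 + A.2.2.2.2.2.1.2.2.1 * B.2.2.1.2.1 + A.2.2.2.2.2.1.2.2.2.1 * B.2.2.2.1.2.1 + A.2.2.2.2.2.1.2.2.2.2.1 * B.2.2.2.2.1.2.1 + A.2.2.2.2.2.1.2.2.2.2.2.1 * B.2.2.2.2.2.1.2.1 + A.2.2.2.2.2.1.2.2.2.2.2.2 * B.2.2.2.2.2.2.2.1,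 A.2.2.2.2.2.1.1 * B.1.2.2.1 + A.2.2.2.2.2.1.2.1 * B.2.1.2.2.1 + A.2.2.2.2.2.1.2.2.1 * B.2.2.1.2.2.1 + A.2.2.2.2.2.1.2.2.2.1 * B.2.2.2.1.2.2.1 + A.2.2.2.2.2.1.2.2.2.2.1 * B.2.2.2.2.1.2.2.1 + A.2.2.2.2.2.1.2.2.2.2.2.1 * B.2.2.2.2.2.1.2.2.1 + A.2.2.2.2.2.1.2.2.2.2.2.2 * B.2.2.2.2.2.2.2.2.1, A.2.2.2.2.2.1.1 * B.1.2.2.2.1 + A.2.2.2.2.2.1.2.1 * B.2.1.2.2.2.1 + A.2.2.2.2.2.1.2.2.1 * B.2.2.1.2.2.2.1 + A.2.2.2.2.2.1.2.2.2.1 * B.2.2.2.1.2.2.2.1 + A.2.2.2.2.2.1.2.2.2.2.1 * B.2.2.2.2.1.2.2.2.1 + A.2.2.2.2.2.1.2.2.2.2.2.1 * B.2.2.2.2.2.1.2.2.2.1 + A.2.2.2.2.2.1.2.2.2.2.2.2 * B.2.2.2.2.2.2.2.2.2.1, A.2.2.2.2.2.1.1 * B.1.2.2.2.2.1 + A.2.2.2.2.2.1.2.1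 * B.2.1.2.2.2.2.1 + A.2.2.2.2.2.1.2.2.1 * B.2.2.1.2.2.2.2.1 + A.2.2.2.2.2.1.2.2.2.1 * B.2.2.2.1.2.2.2.2.1 + A.2.2.2.2.2.1.2.2.2.2.1 * B.2.2.2.2.1.2.2.2.2.1 + A.2.2.2.2.2.1.2.2.2.2.2.1 * B.2.2.2.2.2.1.2.2.2.2.1 + A.2.2.2.2.2.1.2.2.2.2.2.2 * B.2.2.2.2.2.2.2.2.2.2.1, A.2.2.2.2.2.1.1 * B.1.2.2.2.2.2.1 + A.2.2.2.2.2.1.2.1 * B.2.1.2.2.2.2.2.1 + A.2.2.2.2.2.1.2.2.1 * B.2.2.1.2.2.2.2.2.1 + A.2.2.2.2.2.1.2.2.2.1 * B.2.2.2.1.2.2.2.2.2.1 + A.2.2.2.2.2.1.2.2.2.2.1 * B.2.2.2.2.1.2.2.2.2.2.1 + A.2.2.2.2.2.1.2.2.2.2.2.1 * B.2.2.2.2.2.1.2.2.2.2.2.1 + A.2.2.2.2.2.1.2.2.2.2.2.2 * B.2.2.2.2.2.2.2.2.2.2.2.1, A.2.2.2.2.2.1.1 * B.1.2.2.2.2.2.2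 + A.2.2.2.2.2.1.2.1 * B.2.1.2.2.2.2.2.2 + A.2.2.2.2.2.1.2.2.1 * B.2.2.1.2.2.2.2.2.2 + A.2.2.2.2.2.1.2.2.2.1 * B.2.2.2.1.2.2.2.2.2.2 + A.2.2.2.2.2.1.2.2.2.2.1 * B.2.2.2.2.1.2.2.2.2.2.2 + A.2.2.2.2.2.1.2.2.2.2.2.1 * B.2.2.2.2.2.1.2.2.2.2.2.2 + A.2.2.2.2.2.1.2.2.2.2.2.2 * B.2.2.2.2.2.2.2.2.2.2.2.2),
   (A.2.2.2.2.2.2.1 * B.1.1 + A.2.2.2.2.2.2.2.1 * B.2.1.1 + A.2.2.2.2.2.2.2.2.1 * B.2.2.1.1 + A.2.2.2.2.2.2.2.2.2.1 * B.2.2.2.1.1 + A.2.2.2.2.2.2.2.2.2.2.1 * B.2.2.2.2.1.1 + A.2.2.2.2.2.2.2.2.2.2.2.1 * B.2.2.2.2.2.1.1 + A.2.2.2.2.2.2.2.2.2.2.2.2 * B.2.2.2.2.2.2.1, A.2.2.2.2.2.2.1 * B.1.2.1 + A.2.2.2.2.2.2.2.1 * B.2.1.2.1 + A.2.2.2.2.2.2.2.2.1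 * B.2.2.1.2.1 + A.2.2.2.2.2.2.2.2.2.1 * B.2.2.2.1.2.1 + A.2.2.2.2.2.2.2.2.2.2.1 * B.2.2.2.2.1.2.1 + A.2.2.2.2.2.2.2.2.2.2.2.1 * B.2.2.2.2.2.1.2.1 + A.2.2.2.2.2.2.2.2.2.2.2.2 * B.2.2.2.2.2.2.2.1, A.2.2.2.2.2.2.1 * B.1.2.2.1 + A.2.2.2.2.2.2.2.1 * B.2.1.2.2.1 + A.2.2.2.2.2.2.2.2.1 * B.2.2.1.2.2.1 + A.2.2.2.2.2.2.2.2.2.1 * B.2.2.2.1.2.2.1 + A.2.2.2.2.2.2.2.2.2.2.1 * B.2.2.2.2.1.2.2.1 + A.2.2.2.2.2.2.2.2.2.2.2.1 * B.2.2.2.2.2.1.2.2.1 + A.2.2.2.2.2.2.2.2.2.2.2.2 * B.2.2.2.2.2.2.2.2.1, A.2.2.2.2.2.2.1 * B.1.2.2.2.1 + A.2.2.2.2.2.2.2.1 * B.2.1.2.2.2.1 + A.2.2.2.2.2.2.2.2.1 * B.2.2.1.2.2.2.1 + A.2.2.2.2.2.2.2.2.2.1 * B.2.2.2.1.2.2.2.1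 + A.2.2.2.2.2.2.2.2.2.2.1 * B.2.2.2.2.1.2.2.2.1 + A.2.2.2.2.2.2.2.2.2.2.2.1 * B.2.2.2.2.2.1.2.2.2.1 + A.2.2.2.2.2.2.2.2.2.2.2.2 * B.2.2.2.2.2.2.2.2.2.1, A.2.2.2.2.2.2.1 * B.1.2.2.2.2.1 + A.2.2.2.2.2.2.2.1 * B.2.1.2.2.2.2.1 + A.2.2.2.2.2.2.2.2.1 * B.2.2.1.2.2.2.2.1 + A.2.2.2.2.2.2.2.2.2.1 * B.2.2.2.1.2.2.2.2.1 + A.2.2.2.2.2.2.2.2.2.2.1 * B.2.2.2.2.1.2.2.2.2.1 + A.2.2.2.2.2.2.2.2.2.2.2.1 * B.2.2.2.2.2.1.2.2.2.2.1 + A.2.2.2.2.2.2.2.2.2.2.2.2 * B.2.2.2.2.2.2.2.2.2.2.1, A.2.2.2.2.2.2.1 * B.1.2.2.2.2.2.1 + A.2.2.2.2.2.2.2.1 * B.2.1.2.2.2.2.2.1 + A.2.2.2.2.2.2.2.2.1 * B.2.2.1.2.2.2.2.2.1 + A.2.2.2.2.2.2.2.2.2.1 * B.2.2.2.1.2.2.2.2.2.1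 + A.2.2.2.2.2.2.2.2.2.2.1 * B.2.2.2.2.1.2.2.2.2.2.1 + A.2.2.2.2.2.2.2.2.2.2.2.1 * B.2.2.2.2.2.1.2.2.2.2.2.1 + A.2.2.2.2.2.2.2.2.2.2.2.2 * B.2.2.2.2.2.2.2.2.2.2.2.1, A.2.2.2.2.2.2.1 * B.1.2.2.2.2.2.2 + A.2.2.2.2.2.2.2.1 * B.2.1.2.2.2.2.2.2 + A.2.2.2.2.2.2.2.2.1 * B.2.2.1.2.2.2.2.2.2 + A.2.2.2.2.2.2.2.2.2.1 * B.2.2.2.1.2.2.2.2.2.2 + A.2.2.2.2.2.2.2.2.2.2.1 * B.2.2.2.2.1.2.2.2.2.2.2 + A.2.2.2.2.2.2.2.2.2.2.2.1 * B.2.2.2.2.2.1.2.2.2.2.2.2 + A.2.2.2.2.2.2.2.2.2.2.2.2 * B.2.2.2.2.2.2.2.2.2.2.2.2))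

def izApply (A : M7) (v : R7) : R7 :=
  (A.1.1 * v.1 + A.1.2.1 * v.2.1 + A.1.2.2.1 * v.2.2.1 + A.1.2.2.2.1 * v.2.2.2.1 + A.1.2.2.2.2.1 * v.2.2.2.2.1 + A.1.2.2.2.2.2.1 * v.2.2.2.2.2.1 + A.1.2.2.2.2.2.2 * v.2.2.2.2.2.2,
   A.2.1.1 * v.1 + A.2.1.2.1 * v.2.1 + A.2.1.2.2.1 * v.2.2.1 + A.2.1.2.2.2.1 * v.2.2.2.1 + A.2.1.2.2.2.2.1 * v.2.2.2.2.1 + A.2.1.2.2.2.2.2.1 * v.2.2.2.2.2.1 + A.2.1.2.2.2.2.2.2 * v.2.2.2.2.2.2,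
   A.2.2.1.1 * v.1 + A.2.2.1.2.1 * v.2.1 + A.2.2.1.2.2.1 * v.2.2.1 + A.2.2.1.2.2.2.1 * v.2.2.2.1 + A.2.2.1.2.2.2.2.1 * v.2.2.2.2.1 + A.2.2.1.2.2.2.2.2.1 * v.2.2.2.2.2.1 + A.2.2.1.2.2.2.2.2.2 * v.2.2.2.2.2.2,
   A.2.2.2.1.1 * v.1 + A.2.2.2.1.2.1 * v.2.1 + A.2.2.2.1.2.2.1 * v.2.2.1 + A.2.2.2.1.2.2.2.1 * v.2.2.2.1 + A.2.2.2.1.2.2.2.2.1 * v.2.2.2.2.1 + A.2.2.2.1.2.2.2.2.2.1 * v.2.2.2.2.2.1 + A.2.2.2.1.2.2.2.2.2.2 * v.2.2.2.2.2.2,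
   A.2.2.2.2.1.1 * v.1 + A.2.2.2.2.1.2.1 * v.2.1 + A.2.2.2.2.1.2.2.1 * v.2.2.1 + A.2.2.2.2.1.2.2.2.1 * v.2.2.2.1 + A.2.2.2.2.1.2.2.2.2.1 * v.2.2.2.2.1 + A.2.2.2.2.1.2.2.2.2.2.1 * v.2.2.2.2.2.1 + A.2.2.2.2.1.2.2.2.2.2.2 * v.2.2.2.2.2.2,
   A.2.2.2.2.2.1.1 * v.1 + A.2.2.2.2.2.1.2.1 * v.2.1 + A.2.2.2.2.2.1.2.2.1 * v.2.2.1 + A.2.2.2.2.2.1.2.2.2.1 * v.2.2.2.1 + A.2.2.2.2.2.1.2.2.2.2.1 * v.2.2.2.2.1 + A.2.2.2.2.2.1.2.2.2.2.2.1 * v.2.2.2.2.2.1 + A.2.2.2.2.2.1.2.2.2.2.2.2 * v.2.2.2.2.2.2,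
   A.2.2.2.2.2.2.1 * v.1 + A.2.2.2.2.2.2.2.1 * v.2.1 + A.2.2.2.2.2.2.2.2.1 * v.2.2.1 + A.2.2.2.2.2.2.2.2.2.1 * v.2.2.2.1 + A.2.2.2.2.2.2.2.2.2.2.1 * v.2.2.2.2.1 + A.2.2.2.2.2.2.2.2.2.2.2.1 * v.2.2.2.2.2.1 + A.2.2.2.2.2.2.2.2.2.2.2.2 * v.2.2.2.2.2.2)


def mmul (a b : Mob) : Mob :=
  (a.1*b.1 + a.2.1*b.2.2.1, a.1*b.2.1 + a.2.1*b.2.2.2,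
   a.2.2.1*b.1 + a.2.2.2*b.2.2.1, a.2.2.1*b.2.1 + a.2.2.2*b.2.2.2)

def dmul (a b : D) : D := (m7mul a.1 b.1, mmul a.2 b.2)

def dId : D := (((1,0,0,0,0,0,0),(0,1,0,0,0,0,0),(0,0,1,0,0,0,0),(0,0,0,1,0,0,0),
  (0,0,0,0,1,0,0),(0,0,0,0,0,1,0),(0,0,0,0,0,0,1)), (1,0,0,1))

noncomputable def vec7 (p : Xset) : C7 :=
  ((p.1.1 : ℂ), (p.1.2.1 : ℂ), (p.1.2.2 : ℂ), p.2.1.1, p.2.1.2.1, p.2.1.2.2, 1)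

/-- `g` is represented by the affine/Möbius data `d`. -/
def ARep (g : Equiv.Perm Xset) (d : D) : Prop :=
  ∀ p : Xset, vec7 (g p) = mApply d.1 (vec7 p) ∧
    ((g p).2.2.1 : ℂ) =
      ((d.2.1 : ℂ) * p.2.2.1 + (d.2.2.1 : ℂ)) / ((d.2.2.2.1 : ℂ) * p.2.2.1 + (d.2.2.2.2 : ℂ))

lemma mApply_mApply (A B : M7) (v : C7) : mApply A (mApply B v) = mApply (m7mul A B) v := by
  simp only [mApply, m7mul, rdot]
  refine Prod.ext ?_ (Prod.ext ?_ (Prod.ext ?_ (Prod.ext ?_ (Prod.ext ?_ (Prod.ext ?_ ?_))))) <;>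
    push_cast <;> ring

lemma rep_denom_ne {g : Equiv.Perm Xset} {d : D} (h : ARep g d) (p : Xset) :
    ((d.2.2.2.1 : ℂ) * p.2.2.1 + (d.2.2.2.2 : ℂ)) ≠ 0 := by
  intro hd
  have hx := (h p).2
  rw [hd, div_zero] at hx
  exact (g p).2.2.2.1 hx

lemma rep_one : ARep 1 dId := by
  intro p
  constructor
  · simp only [Equiv.Perm.coe_one, id_eq, mApply, rdot, dId, vec7]
    refine Prod.ext ?_ (Prod.ext ?_ (Prod.ext ?_ (Prod.ext ?_ (Prod.ext ?_ (Prod.ext ?_ ?_))))) <;>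
      push_cast <;> ring
  · simp [dId]

lemma rep_mul {g h : Equiv.Perm Xset} {d e : D} (hg : ARep g d) (hh : ARep h e) :
    ARep (g * h) (dmul d e) := by
  obtain ⟨dM, q, r, s, t⟩ := d
  obtain ⟨eM, q', r', s', t'⟩ := e
  intro p
  obtain ⟨hv, hx⟩ := hh p
  obtain ⟨hv', hx'⟩ := hg (h p)
  have hd' := rep_denom_ne hh p
  have hd := rep_denom_ne hg (h p)
  refine ⟨?_, ?_⟩
  · show vec7 (g (h p)) = _
    rw [hv', hv, mApply_mApply]
    rfl
  · show ((g (h p)).2.2.1 : ℂ) = _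
    simp only [dmul, mmul] at *
    set x := (p.2.2.1 : ℂ) with hxdef
    set y := ((h p).2.2.1 : ℂ) with hydef
    have hy : y * ((s' : ℂ) * x + (t' : ℂ)) = (q' : ℂ) * x + (r' : ℂ) := by
      rw [hx, div_mul_cancel₀ _ hd']
    have hD : (((s*q'+t*s' : ℤ) : ℂ) * x + ((s*r'+t*t' : ℤ) : ℂ))
        = ((s:ℂ) * y + (t:ℂ)) * ((s':ℂ) * x + (t':ℂ)) := by
      push_cast
      linear_combination (-(s : ℂ)) * hy
    rw [hx', hD, div_eq_div_iff hd (mul_ne_zero hd hd')]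
    push_cast
    linear_combination ((s:ℂ) * y + (t:ℂ)) * (q:ℂ) * hy

def dgen : Fin 4 → D := ![
  (((-1, 0, 0, 0, 0, 0, 0), (0, -1, 0, 0, 0, 0, 0), (0, 0, -1, 0, 0, 0, 0), (1, 0, 0, 1, 0, 0, 0), (0, 1, 0, 0, 1, 0, 0), (0, 0, 1, 0, 0, 1, 0), (0, 0, 0, 0, 0, 0, 1)), (1, 0, 0, 1)),
  (((-1, 0, 1, 0, 0, 0, 0), (0, 1, 0, 0, 0, 0, 0), (0, 0, 1, 0, 0, 0, 0), (0, 0, 0, -1, 0, 1, 0), (0, 0, 0, 0, 1, 0, 0), (0, 0, 0, 0, 0, 1, 0), (0, 0, 0, 0, 0, 0, 1)), (1, 0, 1, -1)),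
  (((1, 0, 0, 0, 0, 0, 0), (0, 1, 0, 0, 0, 0, 0), (1, 1, -1, 0, 0, 0, 0), (0, 0, 0, 1, 0, 0, 0), (0, 0, 0, 0, 1, 0, 0), (0, 0, 0, 1, 1, -1, 1), (0, 0, 0, 0, 0, 0, 1)), (-1, 1, 0, 1)),
  (((0, 1, 0, 0, 0, 0, 0), (1, 0, 0, 0, 0, 0, 0), (0, 0, 1, 0, 0, 0, 0), (0, 0, 0, 0, 1, 0, 0), (0, 0, 0, 1, 0, 0, 0), (0, 0, 0, 0, 0, 1, 0), (0, 0, 0, 0, 0, 0, 1)), (1, 0, 0, 1))]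


noncomputable def sgen : Fin 4 → Equiv.Perm Xset := ![s0, s1, s2, s3]

lemma rep_s0 : ARep s0 ((((-1, 0, 0, 0, 0, 0, 0), (0, -1, 0, 0, 0, 0, 0), (0, 0, -1, 0, 0, 0, 0), (1, 0, 0, 1, 0, 0, 0), (0, 1, 0, 0, 1, 0, 0), (0, 0, 1, 0, 0, 1, 0), (0, 0, 0, 0, 0, 0, 1)), (1, 0, 0, 1))) := by
  rintro ⟨⟨k,l,m⟩,⟨a,b,c⟩,⟨x,hx⟩⟩
  have h1 : (x : ℂ) - 1 ≠ 0 := sub_ne_zero.mpr hx.2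
  refine ⟨?_, ?_⟩
  · show vec7 (f0 ⟨⟨k,l,m⟩,⟨a,b,c⟩,⟨x,hx⟩⟩) = _
    simp only [f0, vec7, mApply, rdot]
    refine Prod.ext ?_ (Prod.ext ?_ (Prod.ext ?_ (Prod.ext ?_ (Prod.ext ?_ (Prod.ext ?_ ?_))))) <;>
      push_cast <;> ring
  · show (x : ℂ) = _
    push_cast
    ring_nf

lemma rep_s1 : ARep s1 ((((-1, 0, 1, 0, 0, 0, 0), (0, 1, 0, 0, 0, 0, 0), (0, 0, 1, 0, 0, 0, 0), (0, 0, 0, -1, 0, 1, 0), (0, 0, 0, 0, 1, 0, 0), (0, 0, 0, 0, 0, 1, 0), (0, 0, 0, 0, 0, 0, 1)), (1, 0, 1, -1))) := by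
  rintro ⟨⟨k,l,m⟩,⟨a,b,c⟩,⟨x,hx⟩⟩
  have h1 : (x : ℂ) - 1 ≠ 0 := sub_ne_zero.mpr hx.2
  refine ⟨?_, ?_⟩
  · show vec7 (f1 ⟨⟨k,l,m⟩,⟨a,b,c⟩,⟨x,hx⟩⟩) = _
    simp only [f1, vec7, mApply, rdot]
    refine Prod.ext ?_ (Prod.ext ?_ (Prod.ext ?_ (Prod.ext ?_ (Prod.ext ?_ (Prod.ext ?_ ?_))))) <;>
      push_cast <;> ring
  · show (x / (x - 1) : ℂ) = _
    push_cast
    ring_nf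

lemma rep_s2 : ARep s2 ((((1, 0, 0, 0, 0, 0, 0), (0, 1, 0, 0, 0, 0, 0), (1, 1, -1, 0, 0, 0, 0), (0, 0, 0, 1, 0, 0, 0), (0, 0, 0, 0, 1, 0, 0), (0, 0, 0, 1, 1, -1, 1), (0, 0, 0, 0, 0, 0, 1)), (-1, 1, 0, 1))) := by
  rintro ⟨⟨k,l,m⟩,⟨a,b,c⟩,⟨x,hx⟩⟩
  have h1 : (x : ℂ) - 1 ≠ 0 := sub_ne_zero.mpr hx.2
  refine ⟨?_, ?_⟩
  · show vec7 (f2 ⟨⟨k,l,m⟩,⟨a,b,c⟩,⟨x,hx⟩⟩) = _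
    simp only [f2, vec7, mApply, rdot]
    refine Prod.ext ?_ (Prod.ext ?_ (Prod.ext ?_ (Prod.ext ?_ (Prod.ext ?_ (Prod.ext ?_ ?_))))) <;>
      push_cast <;> ring
  · show ((1 - x : ℂ)) = _
    push_cast
    ring_nf

lemma rep_s3 : ARep s3 ((((0, 1, 0, 0, 0, 0, 0), (1, 0, 0, 0, 0, 0, 0), (0, 0, 1, 0, 0, 0, 0), (0, 0, 0, 0, 1, 0, 0), (0, 0, 0, 1, 0, 0, 0), (0, 0, 0, 0, 0, 1, 0), (0, 0, 0, 0, 0, 0, 1)), (1, 0, 0, 1))) := by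
  rintro ⟨⟨k,l,m⟩,⟨a,b,c⟩,⟨x,hx⟩⟩
  have h1 : (x : ℂ) - 1 ≠ 0 := sub_ne_zero.mpr hx.2
  refine ⟨?_, ?_⟩
  · show vec7 (f3 ⟨⟨k,l,m⟩,⟨a,b,c⟩,⟨x,hx⟩⟩) = _
    simp only [f3, vec7, mApply, rdot]
    refine Prod.ext ?_ (Prod.ext ?_ (Prod.ext ?_ (Prod.ext ?_ (Prod.ext ?_ (Prod.ext ?_ ?_))))) <;>
      push_cast <;> ring
  · show (x : ℂ) = _
    push_cast
    ring_nf

lemma rep_sgen : ∀ i : Fin 4, ARep (sgen i) (dgen i) := by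
  intro i
  fin_cases i
  exacts [rep_s0, rep_s1, rep_s2, rep_s3]

lemma sgen_inv (i : Fin 4) : (sgen i)⁻¹ = sgen i := by
  fin_cases i <;> exact Equiv.ext fun _ => rfl

lemma sgen_mem (i : Fin 4) : sgen i ∈ ({s0, s1, s2, s3} : Set (Equiv.Perm Xset)) := by
  fin_cases i <;> simp [sgen]

noncomputable def wperm (w : List (Fin 4)) : Equiv.Perm Xset := w.foldr (fun i g => sgen i * g) 1
def wfold (w : List (Fin 4)) : D := w.foldr (fun i d => dmul (dgen i) d) dId

lemma rep_wperm : ∀ w, ARep (wperm w) (wfold w)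
  | [] => rep_one
  | i :: w => rep_mul (rep_sgen i) (rep_wperm w)

lemma wperm_mem : ∀ w, wperm w ∈ Subgroup.closure ({s0, s1, s2, s3} : Set (Equiv.Perm Xset))
  | [] => one_mem _
  | i :: w => mul_mem (Subgroup.subset_closure (sgen_mem i)) (wperm_mem w)

def c7 (v : R7) : C7 :=
  ((v.1 : ℂ), (v.2.1 : ℂ), (v.2.2.1 : ℂ), (v.2.2.2.1 : ℂ), (v.2.2.2.2.1 : ℂ),
   (v.2.2.2.2.2.1 : ℂ), (v.2.2.2.2.2.2 : ℂ))

lemma czApply (A : M7) (v : R7) : c7 (izApply A v) = mApply A (c7 v) := by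
  simp only [c7, izApply, mApply, rdot]
  refine Prod.ext ?_ (Prod.ext ?_ (Prod.ext ?_ (Prod.ext ?_ (Prod.ext ?_ (Prod.ext ?_ ?_))))) <;>
    push_cast <;> ring

lemma c7_inj {u v : R7} (h : c7 u = c7 v) : u = v := by
  obtain ⟨a1,a2,a3,a4,a5,a6,a7⟩ := u
  obtain ⟨b1,b2,b3,b4,b5,b6,b7⟩ := v
  simp only [c7, Prod.mk.injEq] at h ⊢
  obtain ⟨h1,h2,h3,h4,h5,h6,h7⟩ := h
  refine ⟨by exact_mod_cast h1, by exact_mod_cast h2, by exact_mod_cast h3,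
    by exact_mod_cast h4, by exact_mod_cast h5, by exact_mod_cast h6, by exact_mod_cast h7⟩

lemma rep_inj {g h : Equiv.Perm Xset} {d : D} (hg : ARep g d) (hh : ARep h d) : g = h := by
  apply Equiv.ext
  intro p
  have hv := (hg p).1.trans (hh p).1.symm
  have hx := (hg p).2.trans (hh p).2.symm
  revert hv hx
  generalize g p = P1
  generalize h p = P2
  obtain ⟨⟨k,l,m⟩,⟨a,b,c⟩,⟨x,hx1⟩⟩ := P1
  obtain ⟨⟨k',l',m'⟩,⟨a',b',c'⟩,⟨x',hx2⟩⟩ := P2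
  intro hv hx
  simp only [vec7, Prod.mk.injEq] at hv ⊢
  obtain ⟨h1,h2,h3,h4,h5,h6,-⟩ := hv
  refine ⟨⟨by exact_mod_cast h1, by exact_mod_cast h2, by exact_mod_cast h3⟩,
    ⟨h4, h5, h6⟩, Subtype.ext hx⟩

/-- test point -/
noncomputable def p3 : Xset := ⟨⟨1,2,5⟩,⟨9,17,31⟩,⟨3, by norm_num⟩⟩

lemma hc7p3 : vec7 p3 = c7 (1,2,5,9,17,31,1) := by
  simp only [vec7, c7, p3]
  norm_num

def Pd : Fin 96 → D := ![
  (((1, 0, 0, 0, 0, 0, 0), (0, 1, 0, 0, 0, 0, 0), (0, 0, 1, 0, 0, 0, 0), (0, 0, 0, 1, 0, 0, 0), (0, 0, 0, 0, 1, 0, 0), (0, 0, 0, 0, 0, 1, 0), (0, 0, 0, 0, 0, 0, 1)), (1, 0, 0, 1)),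
  (((-1, 0, 0, 0, 0, 0, 0), (0, -1, 0, 0, 0, 0, 0), (0, 0, -1, 0, 0, 0, 0), (1, 0, 0, 1, 0, 0, 0), (0, 1, 0, 0, 1, 0, 0), (0, 0, 1, 0, 0, 1, 0), (0, 0, 0, 0, 0, 0, 1)), (1, 0, 0, 1)),
  (((-1, 0, 1, 0, 0, 0, 0), (0, 1, 0, 0, 0, 0, 0), (0, 0, 1, 0, 0, 0, 0), (0, 0, 0, -1, 0, 1, 0), (0, 0, 0, 0, 1, 0, 0), (0, 0, 0, 0, 0, 1, 0), (0, 0, 0, 0, 0, 0, 1)), (1, 0, 1, -1)),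
  (((1, 0, 0, 0, 0, 0, 0), (0, 1, 0, 0, 0, 0, 0), (1, 1, -1, 0, 0, 0, 0), (0, 0, 0, 1, 0, 0, 0), (0, 0, 0, 0, 1, 0, 0), (0, 0, 0, 1, 1, -1, 1), (0, 0, 0, 0, 0, 0, 1)), (-1, 1, 0, 1)),
  (((0, 1, 0, 0, 0, 0, 0), (1, 0, 0, 0, 0, 0, 0), (0, 0, 1, 0, 0, 0, 0), (0, 0, 0, 0, 1, 0, 0), (0, 0, 0, 1, 0, 0, 0), (0, 0, 0, 0, 0, 1, 0), (0, 0, 0, 0, 0, 0, 1)), (1, 0, 0, 1)),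
  (((1, 0, -1, 0, 0, 0, 0), (0, -1, 0, 0, 0, 0, 0), (0, 0, -1, 0, 0, 0, 0), (-1, 0, 1, -1, 0, 1, 0), (0, 1, 0, 0, 1, 0, 0), (0, 0, 1, 0, 0, 1, 0), (0, 0, 0, 0, 0, 0, 1)), (1, 0, 1, -1)),
  (((-1, 0, 0, 0, 0, 0, 0), (0, -1, 0, 0, 0, 0, 0), (-1, -1, 1, 0, 0, 0, 0), (1, 0, 0, 1, 0, 0, 0), (0, 1, 0, 0, 1, 0, 0), (1, 1, -1, 1, 1, -1, 1), (0, 0, 0, 0, 0, 0, 1)), (-1, 1, 0, 1)),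
  (((0, -1, 0, 0, 0, 0, 0), (-1, 0, 0, 0, 0, 0, 0), (0, 0, -1, 0, 0, 0, 0), (0, 1, 0, 0, 1, 0, 0), (1, 0, 0, 1, 0, 0, 0), (0, 0, 1, 0, 0, 1, 0), (0, 0, 0, 0, 0, 0, 1)), (1, 0, 0, 1)),
  (((-1, 0, 1, 0, 0, 0, 0), (0, 1, 0, 0, 0, 0, 0), (-1, 1, 0, 0, 0, 0, 0), (0, 0, 0, -1, 0, 1, 0), (0, 0, 0, 0, 1, 0, 0), (0, 0, 0, -1, 1, 0, 1), (0, 0, 0, 0, 0, 0, 1)), (0, -1, 1, -1)),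
  (((0, 1, 0, 0, 0, 0, 0), (-1, 0, 1, 0, 0, 0, 0), (0, 0, 1, 0, 0, 0, 0), (0, 0, 0, 0, 1, 0, 0), (0, 0, 0, -1, 0, 1, 0), (0, 0, 0, 0, 0, 1, 0), (0, 0, 0, 0, 0, 0, 1)), (1, 0, 1, -1)),
  (((0, 1, -1, 0, 0, 0, 0), (0, 1, 0, 0, 0, 0, 0), (1, 1, -1, 0, 0, 0, 0), (0, 0, 0, 0, 1, -1, 1), (0, 0, 0, 0, 1, 0, 0), (0, 0, 0, 1, 1, -1, 1), (0, 0, 0, 0, 0, 0, 1)), (-1, 1, -1, 0)),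
  (((0, 1, 0, 0, 0, 0, 0), (1, 0, 0, 0, 0, 0, 0), (1, 1, -1, 0, 0, 0, 0), (0, 0, 0, 0, 1, 0, 0), (0, 0, 0, 1, 0, 0, 0), (0, 0, 0, 1, 1, -1, 1), (0, 0, 0, 0, 0, 0, 1)), (-1, 1, 0, 1)),
  (((0, -1, 1, 0, 0, 0, 0), (1, 0, 0, 0, 0, 0, 0), (0, 0, 1, 0, 0, 0, 0), (0, 0, 0, 0, -1, 1, 0), (0, 0, 0, 1, 0, 0, 0), (0, 0, 0, 0, 0, 1, 0), (0, 0, 0, 0, 0, 0, 1)), (1, 0, 1, -1)),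
  (((1, 0, -1, 0, 0, 0, 0), (0, -1, 0, 0, 0, 0, 0), (1, -1, 0, 0, 0, 0, 0), (-1, 0, 1, -1, 0, 1, 0), (0, 1, 0, 0, 1, 0, 0), (-1, 1, 0, -1, 1, 0, 1), (0, 0, 0, 0, 0, 0, 1)), (0, -1, 1, -1)),
  (((0, -1, 0, 0, 0, 0, 0), (1, 0, -1, 0, 0, 0, 0), (0, 0, -1, 0, 0, 0, 0), (0, 1, 0, 0, 1, 0, 0), (-1, 0, 1, -1, 0, 1, 0), (0, 0, 1, 0, 0, 1, 0), (0, 0, 0, 0, 0, 0, 1)), (1, 0, 1, -1)),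
  (((0, -1, 1, 0, 0, 0, 0), (0, -1, 0, 0, 0, 0, 0), (-1, -1, 1, 0, 0, 0, 0), (0, 1, -1, 0, 1, -1, 1), (0, 1, 0, 0, 1, 0, 0), (1, 1, -1, 1, 1, -1, 1), (0, 0, 0, 0, 0, 0, 1)), (-1, 1, -1, 0)),
  (((0, -1, 0, 0, 0, 0, 0), (-1, 0, 0, 0, 0, 0, 0), (-1, -1, 1, 0, 0, 0, 0), (0, 1, 0, 0, 1, 0, 0), (1, 0, 0, 1, 0, 0, 0), (1, 1, -1, 1, 1, -1, 1), (0, 0, 0, 0, 0, 0, 1)), (-1, 1, 0, 1)),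
  (((0, 1, -1, 0, 0, 0, 0), (-1, 0, 0, 0, 0, 0, 0), (0, 0, -1, 0, 0, 0, 0), (0, -1, 1, 0, -1, 1, 0), (1, 0, 0, 1, 0, 0, 0), (0, 0, 1, 0, 0, 1, 0), (0, 0, 0, 0, 0, 0, 1)), (1, 0, 1, -1)),
  (((0, 1, -1, 0, 0, 0, 0), (0, 1, 0, 0, 0, 0, 0), (-1, 1, 0, 0, 0, 0, 0), (0, 0, 0, 0, 1, -1, 1), (0, 0, 0, 0, 1, 0, 0), (0, 0, 0, -1, 1, 0, 1), (0, 0, 0, 0, 0, 0, 1)), (0, -1, -1, 0)),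
  (((0, 1, 0, 0, 0, 0, 0), (-1, 0, 1, 0, 0, 0, 0), (-1, 1, 0, 0, 0, 0, 0), (0, 0, 0, 0, 1, 0, 0), (0, 0, 0, -1, 0, 1, 0), (0, 0, 0, -1, 1, 0, 1), (0, 0, 0, 0, 0, 0, 1)), (0, -1, 1, -1)),
  (((0, -1, 1, 0, 0, 0, 0), (-1, 0, 1, 0, 0, 0, 0), (0, 0, 1, 0, 0, 0, 0), (0, 0, 0, 0, -1, 1, 0), (0, 0, 0, -1, 0, 1, 0), (0, 0, 0, 0, 0, 1, 0), (0, 0, 0, 0, 0, 0, 1)), (1, 0, 0, 1)),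
  (((0, 1, 0, 0, 0, 0, 0), (0, 1, -1, 0, 0, 0, 0), (1, 1, -1, 0, 0, 0, 0), (0, 0, 0, 0, 1, 0, 0), (0, 0, 0, 0, 1, -1, 1), (0, 0, 0, 1, 1, -1, 1), (0, 0, 0, 0, 0, 0, 1)), (-1, 1, -1, 0)),
  (((1, 0, -1, 0, 0, 0, 0), (1, 0, 0, 0, 0, 0, 0), (1, 1, -1, 0, 0, 0, 0), (0, 0, 0, 1, 0, -1, 1), (0, 0, 0, 1, 0, 0, 0), (0, 0, 0, 1, 1, -1, 1), (0, 0, 0, 0, 0, 0, 1)), (-1, 1, -1, 0)),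
  (((0, -1, 1, 0, 0, 0, 0), (1, 0, 0, 0, 0, 0, 0), (1, -1, 0, 0, 0, 0, 0), (0, 0, 0, 0, -1, 1, 0), (0, 0, 0, 1, 0, 0, 0), (0, 0, 0, 1, -1, 0, 1), (0, 0, 0, 0, 0, 0, 1)), (0, -1, 1, -1)),
  (((1, 0, 0, 0, 0, 0, 0), (0, -1, 1, 0, 0, 0, 0), (0, 0, 1, 0, 0, 0, 0), (0, 0, 0, 1, 0, 0, 0), (0, 0, 0, 0, -1, 1, 0), (0, 0, 0, 0, 0, 1, 0), (0, 0, 0, 0, 0, 0, 1)), (1, 0, 1, -1)),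
  (((0, -1, 1, 0, 0, 0, 0), (0, -1, 0, 0, 0, 0, 0), (1, -1, 0, 0, 0, 0, 0), (0, 1, -1, 0, 1, -1, 1), (0, 1, 0, 0, 1, 0, 0), (-1, 1, 0, -1, 1, 0, 1), (0, 0, 0, 0, 0, 0, 1)), (0, -1, -1, 0)),
  (((0, -1, 0, 0, 0, 0, 0), (1, 0, -1, 0, 0, 0, 0), (1, -1, 0, 0, 0, 0, 0), (0, 1, 0, 0, 1, 0, 0), (-1, 0, 1, -1, 0, 1, 0), (-1, 1, 0, -1, 1, 0, 1), (0, 0, 0, 0, 0, 0, 1)), (0, -1, 1, -1)),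
  (((0, 1, -1, 0, 0, 0, 0), (1, 0, -1, 0, 0, 0, 0), (0, 0, -1, 0, 0, 0, 0), (0, -1, 1, 0, -1, 1, 0), (-1, 0, 1, -1, 0, 1, 0), (0, 0, 1, 0, 0, 1, 0), (0, 0, 0, 0, 0, 0, 1)), (1, 0, 0, 1)),
  (((0, -1, 0, 0, 0, 0, 0), (0, -1, 1, 0, 0, 0, 0), (-1, -1, 1, 0, 0, 0, 0), (0, 1, 0, 0, 1, 0, 0), (0, 1, -1, 0, 1, -1, 1), (1, 1, -1, 1, 1, -1, 1), (0, 0, 0, 0, 0, 0, 1)), (-1, 1, -1, 0)),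
  (((-1, 0, 1, 0, 0, 0, 0), (-1, 0, 0, 0, 0, 0, 0), (-1, -1, 1, 0, 0, 0, 0), (1, 0, -1, 1, 0, -1, 1), (1, 0, 0, 1, 0, 0, 0), (1, 1, -1, 1, 1, -1, 1), (0, 0, 0, 0, 0, 0, 1)), (-1, 1, -1, 0)),
  (((0, 1, -1, 0, 0, 0, 0), (-1, 0, 0, 0, 0, 0, 0), (-1, 1, 0, 0, 0, 0, 0), (0, -1, 1, 0, -1, 1, 0), (1, 0, 0, 1, 0, 0, 0), (1, -1, 0, 1, -1, 0, 1), (0, 0, 0, 0, 0, 0, 1)), (0, -1, 1, -1)),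
  (((-1, 0, 0, 0, 0, 0, 0), (0, 1, -1, 0, 0, 0, 0), (0, 0, -1, 0, 0, 0, 0), (1, 0, 0, 1, 0, 0, 0), (0, -1, 1, 0, -1, 1, 0), (0, 0, 1, 0, 0, 1, 0), (0, 0, 0, 0, 0, 0, 1)), (1, 0, 1, -1)),
  (((0, 1, 0, 0, 0, 0, 0), (0, 1, -1, 0, 0, 0, 0), (-1, 1, 0, 0, 0, 0, 0), (0, 0, 0, 0, 1, 0, 0), (0, 0, 0, 0, 1, -1, 1), (0, 0, 0, -1, 1, 0, 1), (0, 0, 0, 0, 0, 0, 1)), (0, -1, -1, 0)),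
  (((-1, 0, 0, 0, 0, 0, 0), (-1, 0, 1, 0, 0, 0, 0), (-1, 1, 0, 0, 0, 0, 0), (0, 0, 0, -1, 0, 0, 1), (0, 0, 0, -1, 0, 1, 0), (0, 0, 0, -1, 1, 0, 1), (0, 0, 0, 0, 0, 0, 1)), (0, -1, -1, 0)),
  (((0, -1, 1, 0, 0, 0, 0), (-1, 0, 1, 0, 0, 0, 0), (-1, -1, 1, 0, 0, 0, 0), (0, 0, 0, 0, -1, 1, 0), (0, 0, 0, -1, 0, 1, 0), (0, 0, 0, -1, -1, 1, 1), (0, 0, 0, 0, 0, 0, 1)), (-1, 1, 0, 1)),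
  (((-1, 0, 1, 0, 0, 0, 0), (0, -1, 1, 0, 0, 0, 0), (0, 0, 1, 0, 0, 0, 0), (0, 0, 0, -1, 0, 1, 0), (0, 0, 0, 0, -1, 1, 0), (0, 0, 0, 0, 0, 1, 0), (0, 0, 0, 0, 0, 0, 1)), (1, 0, 0, 1)),
  (((1, 0, -1, 0, 0, 0, 0), (0, 1, -1, 0, 0, 0, 0), (1, 1, -1, 0, 0, 0, 0), (0, 0, 0, 1, 0, -1, 1), (0, 0, 0, 0, 1, -1, 1), (0, 0, 0, 1, 1, -1, 1), (0, 0, 0, 0, 0, 0, 1)), (-1, 1, 0, 1)),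
  (((1, 0, -1, 0, 0, 0, 0), (1, 0, 0, 0, 0, 0, 0), (1, -1, 0, 0, 0, 0, 0), (0, 0, 0, 1, 0, -1, 1), (0, 0, 0, 1, 0, 0, 0), (0, 0, 0, 1, -1, 0, 1), (0, 0, 0, 0, 0, 0, 1)), (0, -1, -1, 0)),
  (((1, 0, 0, 0, 0, 0, 0), (1, 0, -1, 0, 0, 0, 0), (1, 1, -1, 0, 0, 0, 0), (0, 0, 0, 1, 0, 0, 0), (0, 0, 0, 1, 0, -1, 1), (0, 0, 0, 1, 1, -1, 1), (0, 0, 0, 0, 0, 0, 1)), (-1, 1, -1, 0)),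
  (((1, 0, 0, 0, 0, 0, 0), (0, -1, 1, 0, 0, 0, 0), (1, -1, 0, 0, 0, 0, 0), (0, 0, 0, 1, 0, 0, 0), (0, 0, 0, 0, -1, 1, 0), (0, 0, 0, 1, -1, 0, 1), (0, 0, 0, 0, 0, 0, 1)), (0, -1, 1, -1)),
  (((0, -1, 0, 0, 0, 0, 0), (0, -1, 1, 0, 0, 0, 0), (1, -1, 0, 0, 0, 0, 0), (0, 1, 0, 0, 1, 0, 0), (0, 1, -1, 0, 1, -1, 1), (-1, 1, 0, -1, 1, 0, 1), (0, 0, 0, 0, 0, 0, 1)), (0, -1, -1, 0)),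
  (((1, 0, 0, 0, 0, 0, 0), (1, 0, -1, 0, 0, 0, 0), (1, -1, 0, 0, 0, 0, 0), (-1, 0, 0, -1, 0, 0, 1), (-1, 0, 1, -1, 0, 1, 0), (-1, 1, 0, -1, 1, 0, 1), (0, 0, 0, 0, 0, 0, 1)), (0, -1, -1, 0)),
  (((0, 1, -1, 0, 0, 0, 0), (1, 0, -1, 0, 0, 0, 0), (1, 1, -1, 0, 0, 0, 0), (0, -1, 1, 0, -1, 1, 0), (-1, 0, 1, -1, 0, 1, 0), (-1, -1, 1, -1, -1, 1, 1), (0, 0, 0, 0, 0, 0, 1)), (-1, 1, 0, 1)),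
  (((1, 0, -1, 0, 0, 0, 0), (0, 1, -1, 0, 0, 0, 0), (0, 0, -1, 0, 0, 0, 0), (-1, 0, 1, -1, 0, 1, 0), (0, -1, 1, 0, -1, 1, 0), (0, 0, 1, 0, 0, 1, 0), (0, 0, 0, 0, 0, 0, 1)), (1, 0, 0, 1)),
  (((-1, 0, 1, 0, 0, 0, 0), (0, -1, 1, 0, 0, 0, 0), (-1, -1, 1, 0, 0, 0, 0), (1, 0, -1, 1, 0, -1, 1), (0, 1, -1, 0, 1, -1, 1), (1, 1, -1, 1, 1, -1, 1), (0, 0, 0, 0, 0, 0, 1)), (-1, 1, 0, 1)),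
  (((-1, 0, 1, 0, 0, 0, 0), (-1, 0, 0, 0, 0, 0, 0), (-1, 1, 0, 0, 0, 0, 0), (1, 0, -1, 1, 0, -1, 1), (1, 0, 0, 1, 0, 0, 0), (1, -1, 0, 1, -1, 0, 1), (0, 0, 0, 0, 0, 0, 1)), (0, -1, -1, 0)),
  (((-1, 0, 0, 0, 0, 0, 0), (-1, 0, 1, 0, 0, 0, 0), (-1, -1, 1, 0, 0, 0, 0), (1, 0, 0, 1, 0, 0, 0), (1, 0, -1, 1, 0, -1, 1), (1, 1, -1, 1, 1, -1, 1), (0, 0, 0, 0, 0, 0, 1)), (-1, 1, -1, 0)),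
  (((-1, 0, 0, 0, 0, 0, 0), (0, 1, -1, 0, 0, 0, 0), (-1, 1, 0, 0, 0, 0, 0), (1, 0, 0, 1, 0, 0, 0), (0, -1, 1, 0, -1, 1, 0), (1, -1, 0, 1, -1, 0, 1), (0, 0, 0, 0, 0, 0, 1)), (0, -1, 1, -1)),
  (((-1, 0, 0, 0, 0, 0, 0), (0, 1, -1, 0, 0, 0, 0), (-1, 1, 0, 0, 0, 0, 0), (0, 0, 0, -1, 0, 0, 1), (0, 0, 0, 0, 1, -1, 1), (0, 0, 0, -1, 1, 0, 1), (0, 0, 0, 0, 0, 0, 1)), (0, -1, 1, -1)),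
  (((-1, 0, 0, 0, 0, 0, 0), (-1, 0, 1, 0, 0, 0, 0), (-1, -1, 1, 0, 0, 0, 0), (0, 0, 0, -1, 0, 0, 1), (0, 0, 0, -1, 0, 1, 0), (0, 0, 0, -1, -1, 1, 1), (0, 0, 0, 0, 0, 0, 1)), (-1, 1, -1, 0)),
  (((-1, 0, 1, 0, 0, 0, 0), (-1, 0, 0, 0, 0, 0, 0), (-1, 1, 0, 0, 0, 0, 0), (0, 0, 0, -1, 0, 1, 0), (0, 0, 0, -1, 0, 0, 1), (0, 0, 0, -1, 1, 0, 1), (0, 0, 0, 0, 0, 0, 1)), (0, -1, -1, 0)),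
  (((-1, 0, 1, 0, 0, 0, 0), (0, -1, 1, 0, 0, 0, 0), (-1, -1, 1, 0, 0, 0, 0), (0, 0, 0, -1, 0, 1, 0), (0, 0, 0, 0, -1, 1, 0), (0, 0, 0, -1, -1, 1, 1), (0, 0, 0, 0, 0, 0, 1)), (-1, 1, 0, 1)),
  (((1, 0, -1, 0, 0, 0, 0), (0, 1, -1, 0, 0, 0, 0), (0, 0, -1, 0, 0, 0, 0), (0, 0, 0, 1, 0, -1, 1), (0, 0, 0, 0, 1, -1, 1), (0, 0, 0, 0, 0, -1, 2), (0, 0, 0, 0, 0, 0, 1)), (1, 0, 0, 1)),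
  (((0, 1, -1, 0, 0, 0, 0), (1, 0, -1, 0, 0, 0, 0), (1, 1, -1, 0, 0, 0, 0), (0, 0, 0, 0, 1, -1, 1), (0, 0, 0, 1, 0, -1, 1), (0, 0, 0, 1, 1, -1, 1), (0, 0, 0, 0, 0, 0, 1)), (-1, 1, 0, 1)),
  (((1, 0, 0, 0, 0, 0, 0), (1, 0, -1, 0, 0, 0, 0), (1, -1, 0, 0, 0, 0, 0), (0, 0, 0, 1, 0, 0, 0), (0, 0, 0, 1, 0, -1, 1), (0, 0, 0, 1, -1, 0, 1), (0, 0, 0, 0, 0, 0, 1)), (0, -1, -1, 0)),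
  (((0, -1, 0, 0, 0, 0, 0), (0, -1, 1, 0, 0, 0, 0), (1, -1, 0, 0, 0, 0, 0), (0, 0, 0, 0, -1, 0, 1), (0, 0, 0, 0, -1, 1, 0), (0, 0, 0, 1, -1, 0, 1), (0, 0, 0, 0, 0, 0, 1)), (0, -1, -1, 0)),
  (((1, 0, 0, 0, 0, 0, 0), (0, -1, 1, 0, 0, 0, 0), (1, -1, 0, 0, 0, 0, 0), (-1, 0, 0, -1, 0, 0, 1), (0, 1, -1, 0, 1, -1, 1), (-1, 1, 0, -1, 1, 0, 1), (0, 0, 0, 0, 0, 0, 1)), (0, -1, 1, -1)),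
  (((1, 0, 0, 0, 0, 0, 0), (1, 0, -1, 0, 0, 0, 0), (1, 1, -1, 0, 0, 0, 0), (-1, 0, 0, -1, 0, 0, 1), (-1, 0, 1, -1, 0, 1, 0), (-1, -1, 1, -1, -1, 1, 1), (0, 0, 0, 0, 0, 0, 1)), (-1, 1, -1, 0)),
  (((1, 0, -1, 0, 0, 0, 0), (1, 0, 0, 0, 0, 0, 0), (1, -1, 0, 0, 0, 0, 0), (-1, 0, 1, -1, 0, 1, 0), (-1, 0, 0, -1, 0, 0, 1), (-1, 1, 0, -1, 1, 0, 1), (0, 0, 0, 0, 0, 0, 1)), (0, -1, -1, 0)),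
  (((1, 0, -1, 0, 0, 0, 0), (0, 1, -1, 0, 0, 0, 0), (1, 1, -1, 0, 0, 0, 0), (-1, 0, 1, -1, 0, 1, 0), (0, -1, 1, 0, -1, 1, 0), (-1, -1, 1, -1, -1, 1, 1), (0, 0, 0, 0, 0, 0, 1)), (-1, 1, 0, 1)),
  (((-1, 0, 1, 0, 0, 0, 0), (0, -1, 1, 0, 0, 0, 0), (0, 0, 1, 0, 0, 0, 0), (1, 0, -1, 1, 0, -1, 1), (0, 1, -1, 0, 1, -1, 1), (0, 0, -1, 0, 0, -1, 2), (0, 0, 0, 0, 0, 0, 1)), (1, 0, 0, 1)),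
  (((0, -1, 1, 0, 0, 0, 0), (-1, 0, 1, 0, 0, 0, 0), (-1, -1, 1, 0, 0, 0, 0), (0, 1, -1, 0, 1, -1, 1), (1, 0, -1, 1, 0, -1, 1), (1, 1, -1, 1, 1, -1, 1), (0, 0, 0, 0, 0, 0, 1)), (-1, 1, 0, 1)),
  (((-1, 0, 0, 0, 0, 0, 0), (-1, 0, 1, 0, 0, 0, 0), (-1, 1, 0, 0, 0, 0, 0), (1, 0, 0, 1, 0, 0, 0), (1, 0, -1, 1, 0, -1, 1), (1, -1, 0, 1, -1, 0, 1), (0, 0, 0, 0, 0, 0, 1)), (0, -1, -1, 0)),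
  (((0, 1, 0, 0, 0, 0, 0), (0, 1, -1, 0, 0, 0, 0), (-1, 1, 0, 0, 0, 0, 0), (0, -1, 0, 0, -1, 0, 1), (0, -1, 1, 0, -1, 1, 0), (1, -1, 0, 1, -1, 0, 1), (0, 0, 0, 0, 0, 0, 1)), (0, -1, -1, 0)),
  (((-1, 0, 0, 0, 0, 0, 0), (0, 1, -1, 0, 0, 0, 0), (0, 0, -1, 0, 0, 0, 0), (0, 0, 0, -1, 0, 0, 1), (0, 0, 0, 0, 1, -1, 1), (0, 0, 0, 0, 0, -1, 2), (0, 0, 0, 0, 0, 0, 1)), (1, 0, 1, -1)),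
  (((0, 1, -1, 0, 0, 0, 0), (-1, 0, 0, 0, 0, 0, 0), (-1, 1, 0, 0, 0, 0, 0), (0, 0, 0, 0, 1, -1, 1), (0, 0, 0, -1, 0, 0, 1), (0, 0, 0, -1, 1, 0, 1), (0, 0, 0, 0, 0, 0, 1)), (0, -1, 1, -1)),
  (((-1, 0, 1, 0, 0, 0, 0), (-1, 0, 0, 0, 0, 0, 0), (-1, -1, 1, 0, 0, 0, 0), (0, 0, 0, -1, 0, 1, 0), (0, 0, 0, -1, 0, 0, 1), (0, 0, 0, -1, -1, 1, 1), (0, 0, 0, 0, 0, 0, 1)), (-1, 1, -1, 0)),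
  (((0, -1, 0, 0, 0, 0, 0), (0, -1, 1, 0, 0, 0, 0), (-1, -1, 1, 0, 0, 0, 0), (0, 0, 0, 0, -1, 0, 1), (0, 0, 0, 0, -1, 1, 0), (0, 0, 0, -1, -1, 1, 1), (0, 0, 0, 0, 0, 0, 1)), (-1, 1, -1, 0)),
  (((0, 1, -1, 0, 0, 0, 0), (1, 0, -1, 0, 0, 0, 0), (0, 0, -1, 0, 0, 0, 0), (0, 0, 0, 0, 1, -1, 1), (0, 0, 0, 1, 0, -1, 1), (0, 0, 0, 0, 0, -1, 2), (0, 0, 0, 0, 0, 0, 1)), (1, 0, 0, 1)),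
  (((0, -1, 0, 0, 0, 0, 0), (1, 0, -1, 0, 0, 0, 0), (1, -1, 0, 0, 0, 0, 0), (0, 0, 0, 0, -1, 0, 1), (0, 0, 0, 1, 0, -1, 1), (0, 0, 0, 1, -1, 0, 1), (0, 0, 0, 0, 0, 0, 1)), (0, -1, 1, -1)),
  (((0, -1, 1, 0, 0, 0, 0), (0, -1, 0, 0, 0, 0, 0), (1, -1, 0, 0, 0, 0, 0), (0, 0, 0, 0, -1, 1, 0), (0, 0, 0, 0, -1, 0, 1), (0, 0, 0, 1, -1, 0, 1), (0, 0, 0, 0, 0, 0, 1)), (0, -1, -1, 0)),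
  (((1, 0, 0, 0, 0, 0, 0), (0, -1, 1, 0, 0, 0, 0), (0, 0, 1, 0, 0, 0, 0), (-1, 0, 0, -1, 0, 0, 1), (0, 1, -1, 0, 1, -1, 1), (0, 0, -1, 0, 0, -1, 2), (0, 0, 0, 0, 0, 0, 1)), (1, 0, 1, -1)),
  (((0, -1, 1, 0, 0, 0, 0), (1, 0, 0, 0, 0, 0, 0), (1, -1, 0, 0, 0, 0, 0), (0, 1, -1, 0, 1, -1, 1), (-1, 0, 0, -1, 0, 0, 1), (-1, 1, 0, -1, 1, 0, 1), (0, 0, 0, 0, 0, 0, 1)), (0, -1, 1, -1)),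
  (((1, 0, -1, 0, 0, 0, 0), (1, 0, 0, 0, 0, 0, 0), (1, 1, -1, 0, 0, 0, 0), (-1, 0, 1, -1, 0, 1, 0), (-1, 0, 0, -1, 0, 0, 1), (-1, -1, 1, -1, -1, 1, 1), (0, 0, 0, 0, 0, 0, 1)), (-1, 1, -1, 0)),
  (((0, 1, 0, 0, 0, 0, 0), (0, 1, -1, 0, 0, 0, 0), (1, 1, -1, 0, 0, 0, 0), (0, -1, 0, 0, -1, 0, 1), (0, -1, 1, 0, -1, 1, 0), (-1, -1, 1, -1, -1, 1, 1), (0, 0, 0, 0, 0, 0, 1)), (-1, 1, -1, 0)),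
  (((0, -1, 1, 0, 0, 0, 0), (-1, 0, 1, 0, 0, 0, 0), (0, 0, 1, 0, 0, 0, 0), (0, 1, -1, 0, 1, -1, 1), (1, 0, -1, 1, 0, -1, 1), (0, 0, -1, 0, 0, -1, 2), (0, 0, 0, 0, 0, 0, 1)), (1, 0, 0, 1)),
  (((0, 1, 0, 0, 0, 0, 0), (-1, 0, 1, 0, 0, 0, 0), (-1, 1, 0, 0, 0, 0, 0), (0, -1, 0, 0, -1, 0, 1), (1, 0, -1, 1, 0, -1, 1), (1, -1, 0, 1, -1, 0, 1), (0, 0, 0, 0, 0, 0, 1)), (0, -1, 1, -1)),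
  (((0, 1, -1, 0, 0, 0, 0), (0, 1, 0, 0, 0, 0, 0), (-1, 1, 0, 0, 0, 0, 0), (0, -1, 1, 0, -1, 1, 0), (0, -1, 0, 0, -1, 0, 1), (1, -1, 0, 1, -1, 0, 1), (0, 0, 0, 0, 0, 0, 1)), (0, -1, -1, 0)),
  (((0, 1, -1, 0, 0, 0, 0), (-1, 0, 0, 0, 0, 0, 0), (0, 0, -1, 0, 0, 0, 0), (0, 0, 0, 0, 1, -1, 1), (0, 0, 0, -1, 0, 0, 1), (0, 0, 0, 0, 0, -1, 2), (0, 0, 0, 0, 0, 0, 1)), (1, 0, 1, -1)),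
  (((0, -1, 0, 0, 0, 0, 0), (-1, 0, 0, 0, 0, 0, 0), (-1, -1, 1, 0, 0, 0, 0), (0, 0, 0, 0, -1, 0, 1), (0, 0, 0, -1, 0, 0, 1), (0, 0, 0, -1, -1, 1, 1), (0, 0, 0, 0, 0, 0, 1)), (-1, 1, 0, 1)),
  (((0, -1, 1, 0, 0, 0, 0), (0, -1, 0, 0, 0, 0, 0), (-1, -1, 1, 0, 0, 0, 0), (0, 0, 0, 0, -1, 1, 0), (0, 0, 0, 0, -1, 0, 1), (0, 0, 0, -1, -1, 1, 1), (0, 0, 0, 0, 0, 0, 1)), (-1, 1, -1, 0)),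
  (((0, -1, 0, 0, 0, 0, 0), (1, 0, -1, 0, 0, 0, 0), (0, 0, -1, 0, 0, 0, 0), (0, 0, 0, 0, -1, 0, 1), (0, 0, 0, 1, 0, -1, 1), (0, 0, 0, 0, 0, -1, 2), (0, 0, 0, 0, 0, 0, 1)), (1, 0, 1, -1)),
  (((1, 0, -1, 0, 0, 0, 0), (0, -1, 0, 0, 0, 0, 0), (1, -1, 0, 0, 0, 0, 0), (0, 0, 0, 1, 0, -1, 1), (0, 0, 0, 0, -1, 0, 1), (0, 0, 0, 1, -1, 0, 1), (0, 0, 0, 0, 0, 0, 1)), (0, -1, 1, -1)),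
  (((0, -1, 1, 0, 0, 0, 0), (1, 0, 0, 0, 0, 0, 0), (0, 0, 1, 0, 0, 0, 0), (0, 1, -1, 0, 1, -1, 1), (-1, 0, 0, -1, 0, 0, 1), (0, 0, -1, 0, 0, -1, 2), (0, 0, 0, 0, 0, 0, 1)), (1, 0, 1, -1)),
  (((0, 1, 0, 0, 0, 0, 0), (1, 0, 0, 0, 0, 0, 0), (1, 1, -1, 0, 0, 0, 0), (0, -1, 0, 0, -1, 0, 1), (-1, 0, 0, -1, 0, 0, 1), (-1, -1, 1, -1, -1, 1, 1), (0, 0, 0, 0, 0, 0, 1)), (-1, 1, 0, 1)),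
  (((0, 1, -1, 0, 0, 0, 0), (0, 1, 0, 0, 0, 0, 0), (1, 1, -1, 0, 0, 0, 0), (0, -1, 1, 0, -1, 1, 0), (0, -1, 0, 0, -1, 0, 1), (-1, -1, 1, -1, -1, 1, 1), (0, 0, 0, 0, 0, 0, 1)), (-1, 1, -1, 0)),
  (((0, 1, 0, 0, 0, 0, 0), (-1, 0, 1, 0, 0, 0, 0), (0, 0, 1, 0, 0, 0, 0), (0, -1, 0, 0, -1, 0, 1), (1, 0, -1, 1, 0, -1, 1), (0, 0, -1, 0, 0, -1, 2), (0, 0, 0, 0, 0, 0, 1)), (1, 0, 1, -1)),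
  (((-1, 0, 1, 0, 0, 0, 0), (0, 1, 0, 0, 0, 0, 0), (-1, 1, 0, 0, 0, 0, 0), (1, 0, -1, 1, 0, -1, 1), (0, -1, 0, 0, -1, 0, 1), (1, -1, 0, 1, -1, 0, 1), (0, 0, 0, 0, 0, 0, 1)), (0, -1, 1, -1)),
  (((0, -1, 0, 0, 0, 0, 0), (-1, 0, 0, 0, 0, 0, 0), (0, 0, -1, 0, 0, 0, 0), (0, 0, 0, 0, -1, 0, 1), (0, 0, 0, -1, 0, 0, 1), (0, 0, 0, 0, 0, -1, 2), (0, 0, 0, 0, 0, 0, 1)), (1, 0, 0, 1)),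
  (((-1, 0, 0, 0, 0, 0, 0), (0, -1, 0, 0, 0, 0, 0), (-1, -1, 1, 0, 0, 0, 0), (0, 0, 0, -1, 0, 0, 1), (0, 0, 0, 0, -1, 0, 1), (0, 0, 0, -1, -1, 1, 1), (0, 0, 0, 0, 0, 0, 1)), (-1, 1, 0, 1)),
  (((1, 0, -1, 0, 0, 0, 0), (0, -1, 0, 0, 0, 0, 0), (0, 0, -1, 0, 0, 0, 0), (0, 0, 0, 1, 0, -1, 1), (0, 0, 0, 0, -1, 0, 1), (0, 0, 0, 0, 0, -1, 2), (0, 0, 0, 0, 0, 0, 1)), (1, 0, 1, -1)),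
  (((0, 1, 0, 0, 0, 0, 0), (1, 0, 0, 0, 0, 0, 0), (0, 0, 1, 0, 0, 0, 0), (0, -1, 0, 0, -1, 0, 1), (-1, 0, 0, -1, 0, 0, 1), (0, 0, -1, 0, 0, -1, 2), (0, 0, 0, 0, 0, 0, 1)), (1, 0, 0, 1)),
  (((1, 0, 0, 0, 0, 0, 0), (0, 1, 0, 0, 0, 0, 0), (1, 1, -1, 0, 0, 0, 0), (-1, 0, 0, -1, 0, 0, 1), (0, -1, 0, 0, -1, 0, 1), (-1, -1, 1, -1, -1, 1, 1), (0, 0, 0, 0, 0, 0, 1)), (-1, 1, 0, 1)),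
  (((-1, 0, 1, 0, 0, 0, 0), (0, 1, 0, 0, 0, 0, 0), (0, 0, 1, 0, 0, 0, 0), (1, 0, -1, 1, 0, -1, 1), (0, -1, 0, 0, -1, 0, 1), (0, 0, -1, 0, 0, -1, 2), (0, 0, 0, 0, 0, 0, 1)), (1, 0, 1, -1)),
  (((-1, 0, 0, 0, 0, 0, 0), (0, -1, 0, 0, 0, 0, 0), (0, 0, -1, 0, 0, 0, 0), (0, 0, 0, -1, 0, 0, 1), (0, 0, 0, 0, -1, 0, 1), (0, 0, 0, 0, 0, -1, 2), (0, 0, 0, 0, 0, 0, 1)), (1, 0, 0, 1)),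
  (((1, 0, 0, 0, 0, 0, 0), (0, 1, 0, 0, 0, 0, 0), (0, 0, 1, 0, 0, 0, 0), (-1, 0, 0, -1, 0, 0, 1), (0, -1, 0, 0, -1, 0, 1), (0, 0, -1, 0, 0, -1, 2), (0, 0, 0, 0, 0, 0, 1)), (1, 0, 0, 1))
]

def words : Fin 96 → List (Fin 4) := ![
  [],
  [0],
  [1],
  [2],
  [3],
  [1, 0],
  [2, 0],
  [3, 0],
  [2, 1],
  [3, 1],
  [1, 2],
  [3, 2],
  [1, 3],
  [2, 1, 0],
  [3, 1, 0],
  [1, 2, 0],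
  [3, 2, 0],
  [1, 3, 0],
  [1, 2, 1],
  [3, 2, 1],
  [1, 3, 1],
  [3, 1, 2],
  [1, 3, 2],
  [2, 1, 3],
  [3, 1, 3],
  [1, 2, 1, 0],
  [3, 2, 1, 0],
  [1, 3, 1, 0],
  [3, 1, 2, 0],
  [1, 3, 2, 0],
  [2, 1, 3, 0],
  [3, 1, 3, 0],
  [3, 1, 2, 1],
  [1, 3, 2, 1],
  [2, 1, 3, 1],
  [3, 1, 3, 1],
  [1, 3, 1, 2],
  [2, 1, 3, 2],
  [3, 1, 3, 2],
  [3, 2, 1, 3],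
  [3, 1, 2, 1, 0],
  [1, 3, 2, 1, 0],
  [2, 1, 3, 1, 0],
  [3, 1, 3, 1, 0],
  [1, 3, 1, 2, 0],
  [2, 1, 3, 2, 0],
  [3, 1, 3, 2, 0],
  [3, 2, 1, 3, 0],
  [1, 3, 1, 2, 1],
  [2, 1, 3, 2, 1],
  [3, 1, 3, 2, 1],
  [3, 2, 1, 3, 1],
  [2, 1, 3, 1, 2],
  [3, 1, 3, 1, 2],
  [3, 2, 1, 3, 2],
  [1, 3, 2, 1, 3],
  [1, 3, 1, 2, 1, 0],
  [2, 1, 3, 2, 1, 0],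
  [3, 1, 3, 2, 1, 0],
  [3, 2, 1, 3, 1, 0],
  [2, 1, 3, 1, 2, 0],
  [3, 1, 3, 1, 2, 0],
  [3, 2, 1, 3, 2, 0],
  [1, 3, 2, 1, 3, 0],
  [2, 1, 3, 1, 2, 1],
  [3, 1, 3, 1, 2, 1],
  [3, 2, 1, 3, 2, 1],
  [1, 3, 2, 1, 3, 1],
  [3, 2, 1, 3, 1, 2],
  [1, 3, 2, 1, 3, 2],
  [3, 1, 3, 2, 1, 3],
  [2, 1, 3, 1, 2, 1, 0],
  [3, 1, 3, 1, 2, 1, 0],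
  [3, 2, 1, 3, 2, 1, 0],
  [1, 3, 2, 1, 3, 1, 0],
  [3, 2, 1, 3, 1, 2, 0],
  [1, 3, 2, 1, 3, 2, 0],
  [3, 1, 3, 2, 1, 3, 0],
  [3, 2, 1, 3, 1, 2, 1],
  [1, 3, 2, 1, 3, 2, 1],
  [3, 1, 3, 2, 1, 3, 1],
  [1, 3, 2, 1, 3, 1, 2],
  [3, 1, 3, 2, 1, 3, 2],
  [3, 2, 1, 3, 1, 2, 1, 0],
  [1, 3, 2, 1, 3, 2, 1, 0],
  [3, 1, 3, 2, 1, 3, 1, 0],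
  [1, 3, 2, 1, 3, 1, 2, 0],
  [3, 1, 3, 2, 1, 3, 2, 0],
  [1, 3, 2, 1, 3, 1, 2, 1],
  [3, 1, 3, 2, 1, 3, 2, 1],
  [3, 1, 3, 2, 1, 3, 1, 2],
  [1, 3, 2, 1, 3, 1, 2, 1, 0],
  [3, 1, 3, 2, 1, 3, 2, 1, 0],
  [3, 1, 3, 2, 1, 3, 1, 2, 0],
  [3, 1, 3, 2, 1, 3, 1, 2, 1],
  [3, 1, 3, 2, 1, 3, 1, 2, 1, 0]
]

def mtab : Fin 4 → Fin 96 → Fin 96 := ![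
  ![1, 0, 5, 6, 7, 2, 3, 4, 13, 14, 15, 16, 17, 8, 9, 10, 11, 12, 25, 26, 27, 28, 29, 30, 31, 18, 19, 20, 21, 22, 23, 24, 40, 41, 42, 43, 44, 45, 46, 47, 32, 33, 34, 35, 36, 37, 38, 39, 56, 57, 58, 59, 60, 61, 62, 63, 48, 49, 50, 51, 52, 53, 54, 55, 71, 72, 73, 74, 75, 76, 77, 64, 65, 66, 67, 68, 69, 70, 83, 84, 85, 86, 87, 78, 79, 80, 81, 82, 91, 92, 93, 88, 89, 90, 95, 94],
  ![2, 5, 0, 10, 12, 1, 15, 17, 18, 20, 3, 22, 4, 25, 27, 6, 29, 7, 8, 33, 9, 36, 11, 37, 35, 13, 41, 14, 44, 16, 45, 43, 48, 19, 49, 24, 21, 23, 53, 55, 56, 26, 57, 31, 28, 30, 61, 63, 32, 34, 65, 67, 64, 38, 69, 39, 40, 42, 72, 74, 71, 46, 76, 47, 52, 50, 79, 51, 81, 54, 82, 60, 58, 84, 59, 86, 62, 87, 88, 66, 89, 68, 70, 91, 73, 92, 75, 77, 78, 80, 94, 83, 85, 95, 90, 93],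
  ![3, 6, 8, 0, 11, 13, 1, 16, 2, 19, 18, 4, 23, 5, 26, 25, 7, 30, 10, 9, 34, 32, 37, 12, 39, 15, 14, 42, 40, 45, 17, 47, 21, 49, 20, 51, 52, 22, 54, 24, 28, 57, 27, 59, 60, 29, 62, 31, 64, 33, 66, 35, 36, 68, 38, 67, 71, 41, 73, 43, 44, 75, 46, 74, 48, 78, 50, 55, 53, 81, 80, 56, 83, 58, 63, 61, 86, 85, 65, 88, 70, 69, 90, 72, 91, 77, 76, 93, 79, 94, 82, 84, 95, 87, 89, 92],
  ![4, 7, 9, 11, 0, 14, 16, 1, 19, 2, 21, 3, 24, 26, 5, 28, 6, 31, 32, 8, 35, 10, 38, 39, 12, 40, 13, 43, 15, 46, 47, 17, 18, 50, 51, 20, 53, 54, 22, 23, 25, 58, 59, 27, 61, 62, 29, 30, 65, 66, 33, 34, 68, 36, 37, 70, 72, 73, 41, 42, 75, 44, 45, 77, 78, 48, 49, 80, 52, 82, 55, 83, 56, 57, 85, 60, 87, 63, 64, 89, 67, 90, 69, 71, 92, 74, 93, 76, 94, 79, 81, 95, 84, 86, 88, 91]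
]


lemma hP0 : Pd 0 = dId := by decide

lemma hPw : ∀ j : Fin 96, wfold (words j) = Pd j := by decide

lemma hmtab : ∀ (i : Fin 4) (j : Fin 96), dmul (dgen i) (Pd j) = Pd (mtab i j) := by decide

lemma hsep : ∀ j k : Fin 96,
    izApply (Pd j).1 (1,2,5,9,17,31,1) = izApply (Pd k).1 (1,2,5,9,17,31,1) →
    (3*(Pd j).2.1 + (Pd j).2.2.1) * (3*(Pd k).2.2.2.1 + (Pd k).2.2.2.2) =
    (3*(Pd k).2.1 + (Pd k).2.2.1) * (3*(Pd j).2.2.2.1 + (Pd j).2.2.2.2) → j = k := by decide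

end Framework


/-- The group generated by `σ₀, σ₁, σ₂, σ₃` has exactly 96 elements. -/
theorem stmt17 :
    Nat.card (Subgroup.closure {Xset.s0, Xset.s1, Xset.s2, Xset.s3} :
      Subgroup (Equiv.Perm Xset)) = 96 := by
  have key : ∀ g ∈ Subgroup.closure ({Xset.s0, Xset.s1, Xset.s2, Xset.s3} : Set (Equiv.Perm Xset)),
      ∃ j : Fin 96, ARep g (Pd j) := by
    intro g hg
    induction hg using Subgroup.closure_induction_left with
    | one => exact ⟨0, by rw [hP0]; exact rep_one⟩
    | mul_left x hx y hy ih =>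
      obtain ⟨j, hj⟩ := ih
      obtain ⟨i, rfl⟩ : ∃ i : Fin 4, sgen i = x := by
        simp only [Set.mem_insert_iff, Set.mem_singleton_iff] at hx
        rcases hx with rfl | rfl | rfl | rfl
        exacts [⟨0, rfl⟩, ⟨1, rfl⟩, ⟨2, rfl⟩, ⟨3, rfl⟩]
      exact ⟨mtab i j, by rw [← hmtab i j]; exact rep_mul (rep_sgen i) hj⟩
    | inv_mul_cancel x hx y hy ih =>
      obtain ⟨j, hj⟩ := ih
      obtain ⟨i, rfl⟩ : ∃ i : Fin 4, sgen i = x := by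
        simp only [Set.mem_insert_iff, Set.mem_singleton_iff] at hx
        rcases hx with rfl | rfl | rfl | rfl
        exacts [⟨0, rfl⟩, ⟨1, rfl⟩, ⟨2, rfl⟩, ⟨3, rfl⟩]
      rw [sgen_inv i]
      exact ⟨mtab i j, by rw [← hmtab i j]; exact rep_mul (rep_sgen i) hj⟩
  classical
  set Gc := Subgroup.closure ({Xset.s0, Xset.s1, Xset.s2, Xset.s3} : Set (Equiv.Perm Xset))
    with hGc
  choose F hF using fun g : Gc => key g.1 g.2
  have hFinj : Function.Injective F := by
    intro g₁ g₂ h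
    refine Subtype.ext (rep_inj (hF g₁) ?_)
    rw [h]
    exact hF g₂
  haveI hfin : Finite Gc := Finite.of_injective F hFinj
  have hle : Nat.card Gc ≤ 96 := by
    simpa using Nat.card_le_card_of_injective F hFinj
  have hge : 96 ≤ Nat.card Gc := by
    have hEinj : Function.Injective
        (fun j : Fin 96 => (⟨wperm (words j), wperm_mem (words j)⟩ : Gc)) := by
      intro j k h
      have h' : wperm (words j) = wperm (words k) := congrArg Subtype.val h
      have hj : ARep (wperm (words j)) (Pd j) := by
        rw [← hPw j]; exact rep_wperm (words j)
      have hk : ARep (wperm (words j)) (Pd k) := by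
        rw [h', ← hPw k]; exact rep_wperm (words k)
      apply hsep j k
      · have h1 := (hj p3).1
        have h2 := (hk p3).1
        apply c7_inj
        rw [czApply, czApply, ← hc7p3]
        exact h1.symm.trans h2
      · have h1 := (hj p3).2
        have h2 := (hk p3).2
        have e1 := h1.symm.trans h2
        have dj := rep_denom_ne hj p3
        have dk := rep_denom_ne hk p3
        rw [div_eq_div_iff dj dk] at e1
        have hx3 : (p3.2.2.1 : ℂ) = 3 := rfl
        rw [hx3] at e1
        have e2 : ((((3*(Pd j).2.1 + (Pd j).2.2.1) * (3*(Pd k).2.2.2.1 + (Pd k).2.2.2.2) : ℤ)) : ℂ)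
            = (((3*(Pd k).2.1 + (Pd k).2.2.1) * (3*(Pd j).2.2.2.1 + (Pd j).2.2.2.2) : ℤ) : ℂ) := by
          push_cast
          linear_combination e1
        exact_mod_cast e2
    simpa using Nat.card_le_card_of_injective _ hEinj
  exact le_antisymm hle hge
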